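/- arXiv:2111.11637 — 9 statements merged into one kernel-verified Lean document; each statement's English description precedes it below -/
import Mathlib

section
/- For a random variable X with values in [0,1] and t ∈ [0,1], the two-dimensional Lebesgue measure of the region R_t = {(p,y) ∈ ℝ² : t ≤ y < Q_X(p), p ∈ (0,1]} equals the stop-loss transform π_X(t) = E[(X − t)₊]. -/
open MeasureTheory Set ENNReal Filter

/-- The planar Lebesgue measure of the region
`R_t = {(p,y) : p ∈ (0,1], t ≤ y < Q_X(p)}` equals the stop-loss transform
`π_X(t) = E[(X − t)₊]`. -/
theorem area_region_eq_stopLoss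
    {Ω : Type*} [MeasureSpace Ω] [IsProbabilityMeasure (volume : Measure Ω)]
    (X : Ω → ℝ) (hX : Measurable X) (hXb : ∀ ω, X ω ∈ Icc (0:ℝ) 1)
    (Q : ℝ → ℝ)
    (hQ : ∀ p, Q p = sInf {x | p ≤ (volume {ω | X ω ≤ x}).toReal}) :
    ∀ t ∈ Icc (0:ℝ) 1,
      (volume {q : ℝ × ℝ | q.1 ∈ Ioc (0:ℝ) 1 ∧ t ≤ q.2 ∧ q.2 < Q q.1}).toReal
        = ∫ ω, max (X ω - t) 0 := by
  intro t ht
  set μ : Measure Ω := volume with hμ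
  set F : ℝ → ℝ := fun y => (μ {ω | X ω ≤ y}).toReal with hFdef
  have hmble : ∀ y : ℝ, MeasurableSet {ω | X ω ≤ y} := fun y => hX measurableSet_Iic
  have hfin : ∀ y : ℝ, μ {ω | X ω ≤ y} ≠ ∞ := fun y => measure_ne_top μ _
  have hFmono : Monotone F := by
    intro a b hab
    exact ENNReal.toReal_mono (hfin b) (measure_mono fun ω h => le_trans h hab)
  have hF0 : ∀ y, 0 ≤ F y := fun y => ENNReal.toReal_nonneg
  have hF1 : F 1 = 1 := by
    have : {ω | X ω ≤ (1:ℝ)} = univ := eq_univ_of_forall fun ω => (hXb ω).2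
    simp [hFdef, this]
  have hFneg : ∀ y : ℝ, y < 0 → F y = 0 := by
    intro y hy
    have : {ω | X ω ≤ y} = ∅ := by
      ext ω; simp only [mem_setOf_eq, mem_empty_iff_false, iff_false, not_le]
      exact lt_of_lt_of_le hy (hXb ω).1
    simp [hFdef, this]
  -- right continuity along sequences y + 1/(n+1)
  have hFrc : ∀ (y p : ℝ), (∀ n : ℕ, p ≤ F (y + 1 / (n + 1))) → p ≤ F y := by
    intro y p hp
    have hseq : Tendsto (fun n : ℕ => (1:ℝ) / (n + 1)) Filter.atTop (nhds 0) :=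
      tendsto_one_div_add_atTop_nhds_zero_nat
    have hInter : ⋂ n : ℕ, {ω | X ω ≤ y + 1 / (n + 1)} = {ω | X ω ≤ y} := by
      ext ω
      simp only [mem_iInter, mem_setOf_eq]
      constructor
      · intro h
        have : Tendsto (fun n : ℕ => y + (1:ℝ) / (n + 1)) Filter.atTop (nhds (y + 0)) :=
          (tendsto_const_nhds.add hseq)
        rw [add_zero] at this
        exact ge_of_tendsto' this h
      · intro h n
        have : (0:ℝ) < 1 / (n + 1) := by positivity
        linarith
    have hTend : Tendsto (fun n : ℕ => μ {ω | X ω ≤ y + 1 / (n + 1)}) Filter.atTop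
        (nhds (μ {ω | X ω ≤ y})) := by
      rw [← hInter]
      refine tendsto_measure_iInter_atTop (fun n => (hmble _).nullMeasurableSet) ?_ ⟨0, hfin _⟩
      intro m n hmn
      intro ω h
      simp only [mem_setOf_eq] at h ⊢
      have h1 : (1:ℝ) / (n + 1) ≤ 1 / (m + 1) := by
        apply one_div_le_one_div_of_le (by positivity)
        have := (Nat.cast_le (α := ℝ)).mpr hmn
        linarith
      linarith
    have hTendR : Tendsto (fun n : ℕ => F (y + 1 / (n + 1))) Filter.atTop (nhds (F y)) :=
      (ENNReal.tendsto_toReal (hfin y)).comp hTend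
    exact ge_of_tendsto' hTendR hp
  -- Galois correspondence
  have key : ∀ p ∈ Ioc (0:ℝ) 1, ∀ y : ℝ, (y < Q p ↔ F y < p) := by
    intro p hp y
    have hne : (1:ℝ) ∈ {x | p ≤ F x} := by simpa [hF1] using hp.2
    have hbdd : BddBelow {x | p ≤ F x} := by
      refine ⟨0, fun x hx => ?_⟩
      by_contra hx0
      push_neg at hx0
      simp only [mem_setOf_eq] at hx
      rw [hFneg x hx0] at hx
      exact absurd (lt_of_le_of_lt hx hp.1) (lt_irrefl _)
    have hiff : Q p ≤ y ↔ p ≤ F y := by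
      constructor
      · intro h
        refine hFrc y p fun n => ?_
        have hlt : sInf {x | p ≤ F x} < y + 1 / (n + 1) := by
          rw [← hQ]
          have : (0:ℝ) < 1 / (n + 1) := by positivity
          linarith
        obtain ⟨x, hx, hxlt⟩ := exists_lt_of_csInf_lt ⟨1, hne⟩ hlt
        exact le_trans hx (hFmono hxlt.le)
      · intro h
        rw [hQ]
        exact csInf_le hbdd h
    rw [← not_le, ← not_le, hiff]
  -- rewrite the region
  have hregion : {q : ℝ × ℝ | q.1 ∈ Ioc (0:ℝ) 1 ∧ t ≤ q.2 ∧ q.2 < Q q.1}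
      = {q : ℝ × ℝ | t ≤ q.2 ∧ F q.2 < q.1 ∧ q.1 ≤ 1} := by
    ext ⟨p, y⟩
    simp only [mem_setOf_eq, mem_Ioc]
    constructor
    · rintro ⟨hp, hty, hyQ⟩
      exact ⟨hty, (key p hp y).mp hyQ, hp.2⟩
    · rintro ⟨hty, hFp, hp1⟩
      have hp0 : 0 < p := lt_of_le_of_lt (hF0 y) hFp
      exact ⟨⟨hp0, hp1⟩, hty, (key p ⟨hp0, hp1⟩ y).mpr hFp⟩
  have hFmeas : Measurable F := hFmono.measurable
  have hsmeas : MeasurableSet {q : ℝ × ℝ | t ≤ q.2 ∧ F q.2 < q.1 ∧ q.1 ≤ 1} := by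
    refine MeasurableSet.inter (measurableSet_le measurable_const measurable_snd) ?_
    exact MeasurableSet.inter (measurableSet_lt (hFmeas.comp measurable_snd) measurable_fst)
      (measurableSet_le measurable_fst measurable_const)
  -- compute the area by Fubini
  have harea : volume {q : ℝ × ℝ | t ≤ q.2 ∧ F q.2 < q.1 ∧ q.1 ≤ 1}
      = ∫⁻ y in Ici t, μ {ω | y < X ω} := by
    rw [Measure.volume_eq_prod, Measure.prod_apply_symm hsmeas]
    have hslice : ∀ y : ℝ, volume ((fun x => (x, y)) ⁻¹' {q : ℝ × ℝ | t ≤ q.2 ∧ F q.2 < q.1 ∧ q.1 ≤ 1})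
        = (Ici t).indicator (fun y => μ {ω | y < X ω}) y := by
      intro y
      by_cases hty : t ≤ y
      · have hpre : (fun x => (x, y)) ⁻¹' {q : ℝ × ℝ | t ≤ q.2 ∧ F q.2 < q.1 ∧ q.1 ≤ 1}
            = Ioc (F y) 1 := by
          ext x; simp [mem_Ioc, hty]
        rw [hpre, indicator_of_mem (show y ∈ Ici t from hty), Real.volume_Ioc]
        have hcompl : {ω | y < X ω} = {ω | X ω ≤ y}ᶜ := by ext ω; simp [not_le]
        rw [hcompl, measure_compl (hmble y) (hfin y), measure_univ]
        rw [ENNReal.ofReal_sub _ (hF0 y), ENNReal.ofReal_one, hFdef,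
          ENNReal.ofReal_toReal (hfin y)]
      · have hpre : (fun x => (x, y)) ⁻¹' {q : ℝ × ℝ | t ≤ q.2 ∧ F q.2 < q.1 ∧ q.1 ≤ 1}
            = (∅ : Set ℝ) := by
          ext x; simp [hty]
        rw [hpre, indicator_of_notMem (show y ∉ Ici t from hty)]
        simp
    simp_rw [hslice]
    rw [lintegral_indicator measurableSet_Ici]
  -- layer cake for the integral
  have hnn : (0:ℝ → ℝ) ≤ fun s => 0 := le_refl _
  have hmax_meas : Measurable fun ω => max (X ω - t) 0 :=
    (hX.sub measurable_const).max measurable_const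
  have hint : ∫ ω, max (X ω - t) 0 ∂μ
      = (∫⁻ ω, ENNReal.ofReal (max (X ω - t) 0) ∂μ).toReal :=
    integral_eq_lintegral_of_nonneg_ae (Filter.Eventually.of_forall fun ω => le_max_right _ _)
      hmax_meas.aestronglyMeasurable
  have hlayer : ∫⁻ ω, ENNReal.ofReal (max (X ω - t) 0) ∂μ
      = ∫⁻ s in Ioi (0:ℝ), μ {a | s < max (X a - t) 0} :=
    lintegral_eq_lintegral_meas_lt μ (Filter.Eventually.of_forall fun ω => le_max_right _ _)
      hmax_meas.aemeasurable
  have hsets : ∫⁻ s in Ioi (0:ℝ), μ {a | s < max (X a - t) 0}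
      = ∫⁻ s in Ioi (0:ℝ), μ {a | s + t < X a} := by
    refine setLIntegral_congr_fun measurableSet_Ioi (fun s hs => ?_)
    congr 1
    ext a
    simp only [mem_setOf_eq, lt_max_iff, lt_sub_iff_add_lt]
    have : ¬ s < (0:ℝ) := not_lt.mpr (le_of_lt hs)
    tauto
  have htrans : ∫⁻ s in Ioi (0:ℝ), μ {a | s + t < X a}
      = ∫⁻ y in Ioi t, μ {a | y < X a} := by
    have hpre : (fun x : ℝ => x + t) ⁻¹' Ioi t = Ioi 0 := by
      ext x; simp [mem_Ioi]
    have := (measurePreserving_add_right (volume : Measure ℝ) t).setLIntegral_comp_preimage_emb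
      (MeasurableEquiv.addRight t).measurableEmbedding (fun y => μ {a | y < X a}) (Ioi t)
    rw [hpre] at this
    convert this using 1
  have hIoi : ∫⁻ y in Ioi t, μ {a | y < X a} = ∫⁻ y in Ici t, μ {a | y < X a} :=
    setLIntegral_congr Ioi_ae_eq_Ici
  rw [hregion, harea, hint, hlayer, hsets, htrans, hIoi]
end

section
/- Let S be a random variable with values in [0,1], let v ∈ [0,1] and z ∈ [0,1−v], and define φ(s; v, z) = s for s ≤ v, φ(s; v, z) = v for v < s ≤ v + z, and φ(s; v, z) = s − z for s > v + z. Then the random variable R = φ(S; v, z) has stop-loss transform π_R(t) = π_S(t) − π_S(v) + π_S(v+z) for t ≤ v, and π_R(t) = π_S(t + z) for t > v. -/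
open MeasureTheory Set

lemma integrable_maxsub {Ω : Type*} [MeasureSpace Ω]
    [IsProbabilityMeasure (volume : Measure Ω)]
    (S : Ω → ℝ) (hS : Measurable S) (hSb : ∀ ω, S ω ∈ Icc (0:ℝ) 1) (c : ℝ) :
    Integrable (fun ω => max (S ω - c) 0) := by
  apply Integrable.mono' (integrable_const (1 + |c|))
  · exact ((hS.sub measurable_const).max measurable_const).aestronglyMeasurable
  · refine Filter.Eventually.of_forall fun ω => ?_
    have h1 := (hSb ω).1
    have h2 := (hSb ω).2
    rw [Real.norm_eq_abs, abs_of_nonneg (le_max_right _ _)]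
    have : S ω - c ≤ 1 + |c| := by
      have := neg_abs_le c
      linarith
    exact max_le this (by positivity)

/-- Stop-loss transform of the greedily clipped random variable
`R = φ(S; v, z)`: `π_R(t) = π_S(t) − π_S(v) + π_S(v+z)` for `t ≤ v`, and
`π_R(t) = π_S(t+z)` for `t > v`. -/
theorem stopLoss_greedy_clip
    {Ω : Type*} [MeasureSpace Ω] [IsProbabilityMeasure (volume : Measure Ω)]
    (S : Ω → ℝ) (hS : Measurable S) (hSb : ∀ ω, S ω ∈ Icc (0:ℝ) 1)
    (v z : ℝ) (hv : v ∈ Icc (0:ℝ) 1) (hz : z ∈ Icc (0:ℝ) (1 - v))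
    (φ : ℝ → ℝ)
    (hφ : ∀ s, φ s = if s ≤ v then s else if s ≤ v + z then v else s - z)
    (πS πR : ℝ → ℝ)
    (hπS : ∀ t, πS t = ∫ ω, max (S ω - t) 0)
    (hπR : ∀ t, πR t = ∫ ω, max (φ (S ω) - t) 0) :
    ∀ t ∈ Icc (0:ℝ) 1,
      (t ≤ v → πR t = πS t - πS v + πS (v + z)) ∧
      (v < t → πR t = πS (t + z)) := by
  intro t ht
  have hz0 := hz.1
  constructor
  · intro htv
    have key : ∀ ω, max (φ (S ω) - t) 0
        = max (S ω - t) 0 + max (S ω - (v + z)) 0 - max (S ω - v) 0 := by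
      intro ω
      rw [hφ]
      rcases le_or_gt (S ω) v with h1 | h1
      · rw [if_pos h1,
          max_eq_right (show S ω - v ≤ 0 by linarith),
          max_eq_right (show S ω - (v + z) ≤ 0 by linarith)]
        ring
      · rw [if_neg (not_le.mpr h1)]
        rcases le_or_gt (S ω) (v + z) with h2 | h2
        · rw [if_pos h2,
            max_eq_left (show 0 ≤ v - t by linarith),
            max_eq_left (show 0 ≤ S ω - t by linarith),
            max_eq_left (show 0 ≤ S ω - v by linarith),
            max_eq_right (show S ω - (v + z) ≤ 0 by linarith)]
          ring
        · rw [if_neg (not_le.mpr h2),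
            max_eq_left (show 0 ≤ S ω - z - t by linarith),
            max_eq_left (show 0 ≤ S ω - t by linarith),
            max_eq_left (show 0 ≤ S ω - v by linarith),
            max_eq_left (show 0 ≤ S ω - (v + z) by linarith)]
          ring
    rw [hπR, hπS, hπS, hπS]
    simp_rw [key]
    have h1 := integral_sub ((integrable_maxsub S hS hSb t).add
        (integrable_maxsub S hS hSb (v + z))) (integrable_maxsub S hS hSb v)
    have h2 := integral_add (integrable_maxsub S hS hSb t) (integrable_maxsub S hS hSb (v + z))
    simp only [Pi.add_apply] at h1
    rw [h1, h2]
    ring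
  · intro hvt
    have key : ∀ ω, max (φ (S ω) - t) 0 = max (S ω - (t + z)) 0 := by
      intro ω
      rw [hφ]
      rcases le_or_gt (S ω) v with h1 | h1
      · rw [if_pos h1, max_eq_right (show S ω - t ≤ 0 by linarith),
          max_eq_right (show S ω - (t + z) ≤ 0 by linarith)]
      · rw [if_neg (not_le.mpr h1)]
        rcases le_or_gt (S ω) (v + z) with h2 | h2
        · rw [if_pos h2, max_eq_right (show v - t ≤ 0 by linarith),
            max_eq_right (show S ω - (t + z) ≤ 0 by linarith)]
        · rw [if_neg (not_le.mpr h2)]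
          congr 1
          ring
    rw [hπR, hπS]
    simp_rw [key]
end

section
/- Let h₁,…,hₙ be positive reals with Σ h_k = 1 and α₁ > … > αₙ in (0,1]. Define H_k = Σ_{i≤k} h_i. The discrete random variable S̄ supported on {0, H₁, …, H_{n−1}, 1} with probabilities P(S̄ = 0) = 1 − α₁, P(S̄ = H_k) = α_k − α_{k+1} for 1 ≤ k ≤ n−1, and P(S̄ = 1) = αₙ, has stop-loss transform equal to the piecewise linear function joining the n+1 points (H_k, Σ_{i>k} h_i α_i) for k = 0,1,…,n (with H₀ = 0 and the last point (1, 0)). -/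
open MeasureTheory Set Finset

/-- Abel-type summation by parts for telescoping coefficients. -/
lemma abel_aux (q Hf : ℕ → ℝ) (t : ℝ) (a : ℕ) :
    ∀ m, a ≤ m →
      ∑ j ∈ Finset.Icc a m, (q j - q (j + 1)) * (Hf j - t)
        = ∑ j ∈ Finset.Icc a m, q j * (Hf j - Hf (j - 1))
          + q a * (Hf (a - 1) - t) - q (m + 1) * (Hf m - t) := by
  intro m hm
  induction m, hm using Nat.le_induction with
  | base =>
      simp only [Finset.Icc_self, Finset.sum_singleton]
      ring
  | succ m hm ih =>
      rw [Finset.sum_Icc_succ_top (by omega : a ≤ m + 1),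
        Finset.sum_Icc_succ_top (by omega : a ≤ m + 1), ih]
      simp only [Nat.add_sub_cancel]
      ring

/-- The stop-loss transform of the maximally convex distribution `S̄` is the
piecewise linear function joining the points `(H_k, Σ_{i>k} h_i α_i)`. -/
theorem stopLoss_maximallyConvex_piecewiseLinear
    {Ω : Type*} [MeasureSpace Ω] [IsProbabilityMeasure (volume : Measure Ω)]
    (n : ℕ) (hn : 1 ≤ n) (h α : ℕ → ℝ)
    (hpos : ∀ i ∈ Finset.Icc 1 n, 0 < h i)
    (hsum : ∑ i ∈ Finset.Icc 1 n, h i = 1)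
    (hαmem : ∀ i ∈ Finset.Icc 1 n, α i ∈ Set.Ioc (0:ℝ) 1)
    (hαdec : ∀ i ∈ Finset.Icc 1 (n - 1), α (i + 1) < α i)
    (H : ℕ → ℝ) (hH : ∀ k, H k = ∑ i ∈ Finset.Icc 1 k, h i)
    (Sbar : Ω → ℝ) (hmeas : Measurable Sbar)
    (hsupp : ∀ ω, ∃ k ≤ n, Sbar ω = H k)
    (hP0 : (volume {ω | Sbar ω = 0}).toReal = 1 - α 1)
    (hPk : ∀ k ∈ Finset.Icc 1 (n - 1),
      (volume {ω | Sbar ω = H k}).toReal = α k - α (k + 1))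
    (hPn : (volume {ω | Sbar ω = 1}).toReal = α n) :
    ∀ k < n, ∀ t ∈ Set.Icc (H k) (H (k + 1)),
      (∫ ω, max (Sbar ω - t) 0)
        = (∑ i ∈ Finset.Icc (k + 1) n, h i * α i)
          + (t - H k) / (H (k + 1) - H k) *
            ((∑ i ∈ Finset.Icc (k + 2) n, h i * α i)
              - ∑ i ∈ Finset.Icc (k + 1) n, h i * α i) := by
  intro k hk t ht
  have hHn : H n = 1 := by rw [hH]; exact hsum
  -- consecutive difference of H is h
  have hdiff : ∀ j : ℕ, 1 ≤ j → j ≤ n → H j - H (j - 1) = h j := by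
    intro j hj _
    cases j with
    | zero => omega
    | succ m =>
        rw [hH, hH, Finset.sum_Icc_succ_top (Nat.succ_le_succ (Nat.zero_le m))]
        simp
  -- monotonicity of H
  have hHle : ∀ a b : ℕ, a ≤ b → b ≤ n → H a ≤ H b := by
    intro a b hab hbn
    rw [hH, hH]
    apply Finset.sum_le_sum_of_subset_of_nonneg
    · exact Finset.Icc_subset_Icc_right hab
    · intro i hi _
      exact le_of_lt (hpos i (Finset.mem_Icc.mpr
        ⟨(Finset.mem_Icc.mp hi).1, le_trans (Finset.mem_Icc.mp hi).2 hbn⟩))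
  have hHlt : ∀ a b : ℕ, a < b → b ≤ n → H a < H b := by
    intro a b hab hbn
    have h1 : H a < H (a + 1) := by
      have := hdiff (a + 1) (by omega) (by omega)
      have := hpos (a + 1) (Finset.mem_Icc.mpr ⟨by omega, by omega⟩)
      simp only [Nat.add_sub_cancel] at *
      linarith
    exact lt_of_lt_of_le h1 (hHle (a + 1) b (by omega) hbn)
  have hHinj : ∀ a b : ℕ, a ≤ n → b ≤ n → H a = H b → a = b := by
    intro a b han hbn hab
    rcases lt_trichotomy a b with hlt | heq | hgt
    · exact absurd hab (ne_of_lt (hHlt a b hlt hbn))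
    · exact heq
    · exact absurd hab.symm (ne_of_lt (hHlt b a hgt han))
  set A : ℕ → Set Ω := fun j => {ω | Sbar ω = H j} with hA
  have hAmeas : ∀ j, MeasurableSet (A j) := fun j => hmeas (measurableSet_singleton (H j))
  set c : ℕ → ℝ := fun j => max (H j - t) 0 with hc
  -- decompose the integrand as a finite sum of indicators
  have hfun : (fun ω => max (Sbar ω - t) 0)
      = fun ω => ∑ j ∈ Finset.range (n + 1), (A j).indicator (fun _ => c j) ω := by
    funext ω
    obtain ⟨j, hj, hje⟩ := hsupp ω
    rw [Finset.sum_eq_single j]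
    · simp [hA, Set.indicator, hje, hc]
    · intro b hb hbj
      have hbn := Finset.mem_range.mp hb
      apply Set.indicator_of_notMem
      simp only [hA, Set.mem_setOf_eq, hje]
      intro hcontra
      exact hbj (hHinj j b hj (by omega) hcontra).symm
    · intro hj'
      exact absurd (Finset.mem_range.mpr (Nat.lt_succ_of_le hj)) hj'
  rw [hfun, integral_finset_sum _ (fun j _ =>
    (integrable_const (c j)).indicator (hAmeas j))]
  have hint : ∀ j, (∫ ω, (A j).indicator (fun _ => c j) ω)
      = (volume (A j)).toReal * c j := by
    intro j
    rw [integral_indicator_const (c j) (hAmeas j), smul_eq_mul]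
    rfl
  simp_rw [hint]
  -- reduce to the sum over j in [k+1, n]
  have hsub : Finset.Icc (k + 1) n ⊆ Finset.range (n + 1) := by
    intro j hj
    simp only [Finset.mem_Icc] at hj
    exact Finset.mem_range.mpr (by omega)
  have step1 : ∑ j ∈ Finset.range (n + 1), (volume (A j)).toReal * c j
      = ∑ j ∈ Finset.Icc (k + 1) n, (volume (A j)).toReal * (H j - t) := by
    rw [← Finset.sum_subset hsub]
    · apply Finset.sum_congr rfl
      intro j hj
      simp only [Finset.mem_Icc] at hj
      congr 1
      exact max_eq_left (sub_nonneg.mpr (le_trans ht.2 (hHle (k + 1) j hj.1 hj.2)))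
    · intro j hj hj'
      simp only [Finset.mem_range] at hj
      simp only [Finset.mem_Icc, not_and, not_le] at hj'
      have hjk : j ≤ k := by omega
      have : c j = 0 := max_eq_right (sub_nonpos.mpr
        (le_trans (hHle j k hjk (by omega)) ht.1))
      rw [this, mul_zero]
  rw [step1]
  -- the telescoping coefficients
  set q : ℕ → ℝ := fun j => if j ≤ n then α j else 0 with hq
  have step2 : ∑ j ∈ Finset.Icc (k + 1) n, (volume (A j)).toReal * (H j - t)
      = ∑ j ∈ Finset.Icc (k + 1) n, (q j - q (j + 1)) * (H j - t) := by
    apply Finset.sum_congr rfl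
    intro j hj
    simp only [Finset.mem_Icc] at hj
    congr 1
    rcases eq_or_lt_of_le hj.2 with rfl | hjn
    · have : A j = {ω | Sbar ω = 1} := by rw [hA]; simp [hHn]
      rw [this, hPn, hq]
      simp
    · have hj' : j ∈ Finset.Icc 1 (n - 1) := Finset.mem_Icc.mpr ⟨by omega, by omega⟩
      rw [hPk j hj', hq]
      simp only [if_pos hj.2, if_pos (by omega : j + 1 ≤ n)]
  rw [step2, abel_aux q H t (k + 1) n (by omega)]
  have step3 : ∑ j ∈ Finset.Icc (k + 1) n, q j * (H j - H (j - 1))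
      = ∑ j ∈ Finset.Icc (k + 1) n, h j * α j := by
    apply Finset.sum_congr rfl
    intro j hj
    simp only [Finset.mem_Icc] at hj
    rw [hq]
    simp only [if_pos hj.2]
    rw [hdiff j (by omega) hj.2, mul_comm]
  rw [step3]
  have hqk : q (k + 1) = α (k + 1) := by rw [hq]; simp [Nat.succ_le_of_lt hk]
  have hqn : q (n + 1) = 0 := by rw [hq]; simp
  rw [hqk, hqn]
  simp only [Nat.add_sub_cancel, zero_mul, sub_zero]
  -- final algebra
  have hsplit : ∑ i ∈ Finset.Icc (k + 1) n, h i * α i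
      = h (k + 1) * α (k + 1) + ∑ i ∈ Finset.Icc (k + 2) n, h i * α i := by
    have : Finset.Icc (k + 1) n = insert (k + 1) (Finset.Icc (k + 2) n) := by
      ext j
      simp only [Finset.mem_Icc, Finset.mem_insert]
      omega
    rw [this, Finset.sum_insert (by simp)]
  have hHk1 : H (k + 1) - H k = h (k + 1) := by
    have := hdiff (k + 1) (by omega) (by omega)
    simpa using this
  have hhpos : 0 < h (k + 1) := hpos (k + 1) (Finset.mem_Icc.mpr ⟨by omega, by omega⟩)
  rw [hHk1, hsplit]
  field_simp
  ring
end

section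
/- With h, α, H_k and the maximally convex distribution S̄ as above, S̄ is comonotonically (h,α)-decomposable: the random variables X_k = ((S̄ − H_{k−1})₊ − (S̄ − H_k)₊)/h_k for k = 1,…,n take values in [0,1], satisfy E[X_k] = α_k, are comonotonic (each X_k is a nondecreasing function of S̄), and satisfy S̄ = Σ_{k=1}^n h_k X_k. -/
open MeasureTheory Set Finset

private lemma telescope_aux (α : ℕ → ℝ) :
    ∀ m k, k ≤ m + 1 → ∑ j ∈ Finset.Icc k m, (α j - α (j + 1)) = α k - α (m + 1) := by
  intro m
  induction m with
  | zero =>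
    intro k hk
    interval_cases k <;> simp
  | succ m ih =>
    intro k hk
    by_cases hkm : k ≤ m + 1
    · rw [Finset.sum_Icc_succ_top hkm, ih k hkm]; ring
    · have hk2 : k = m + 2 := by omega
      subst hk2
      simp

/-- The maximally convex distribution `S̄` is comonotonically `(h,α)`-decomposable:
the variables `X_k = ((S̄ − H_{k−1})₊ − (S̄ − H_k)₊)/h_k` take values in `[0,1]`,
have means `α_k`, are nondecreasing functions of `S̄`, and sum (weighted) to `S̄`. -/
theorem maximallyConvex_comonotonic_decomposition
    {Ω : Type*} [MeasureSpace Ω] [IsProbabilityMeasure (volume : Measure Ω)]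
    (n : ℕ) (hn : 1 ≤ n) (h α : ℕ → ℝ)
    (hpos : ∀ i ∈ Finset.Icc 1 n, 0 < h i)
    (hsum : ∑ i ∈ Finset.Icc 1 n, h i = 1)
    (hαmem : ∀ i ∈ Finset.Icc 1 n, α i ∈ Set.Ioc (0:ℝ) 1)
    (hαdec : ∀ i ∈ Finset.Icc 1 (n - 1), α (i + 1) < α i)
    (H : ℕ → ℝ) (hH : ∀ k, H k = ∑ i ∈ Finset.Icc 1 k, h i)
    (Sbar : Ω → ℝ) (hmeas : Measurable Sbar)
    (hsupp : ∀ ω, ∃ k ≤ n, Sbar ω = H k)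
    (hP0 : (volume {ω | Sbar ω = 0}).toReal = 1 - α 1)
    (hPk : ∀ k ∈ Finset.Icc 1 (n - 1),
      (volume {ω | Sbar ω = H k}).toReal = α k - α (k + 1))
    (hPn : (volume {ω | Sbar ω = 1}).toReal = α n)
    (X : ℕ → Ω → ℝ)
    (hX : ∀ k, ∀ ω,
      X k ω = (max (Sbar ω - H (k - 1)) 0 - max (Sbar ω - H k) 0) / h k) :
    (∀ k ∈ Finset.Icc 1 n, ∀ ω, X k ω ∈ Set.Icc (0:ℝ) 1) ∧
    (∀ k ∈ Finset.Icc 1 n, (∫ ω, X k ω) = α k) ∧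
    (∀ k ∈ Finset.Icc 1 n, ∀ ω ω', Sbar ω ≤ Sbar ω' → X k ω ≤ X k ω') ∧
    (∀ ω, Sbar ω = ∑ k ∈ Finset.Icc 1 n, h k * X k ω) := by
  have hHn : H n = 1 := by rw [hH]; exact hsum
  have hIoc : ∀ k, H k = ∑ i ∈ Finset.Ioc 0 k, h i := by
    intro k; rw [hH, ← Finset.Icc_add_one_left_eq_Ioc, zero_add]
  have hmono : ∀ i j, i ≤ j → j ≤ n → H i ≤ H j := by
    intro i j hij hjn
    rw [hIoc, hIoc, ← Finset.sum_Ioc_consecutive h (Nat.zero_le i) hij]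
    have h0 : 0 ≤ ∑ x ∈ Finset.Ioc i j, h x := by
      refine Finset.sum_nonneg fun x hx => ?_
      rw [Finset.mem_Ioc] at hx
      exact (hpos x (Finset.mem_Icc.mpr ⟨by omega, by omega⟩)).le
    linarith
  have hstrict : ∀ i j, i < j → j ≤ n → H i < H j := by
    intro i j hij hjn
    rw [hIoc, hIoc, ← Finset.sum_Ioc_consecutive h (Nat.zero_le i) hij.le]
    have h0 : 0 < ∑ x ∈ Finset.Ioc i j, h x := by
      refine Finset.sum_pos (fun x hx => ?_) (Finset.nonempty_Ioc.mpr hij)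
      rw [Finset.mem_Ioc] at hx
      exact hpos x (Finset.mem_Icc.mpr ⟨by omega, by omega⟩)
    linarith
  have hdiff : ∀ k, 1 ≤ k → H (k - 1) + h k = H k := by
    intro k hk1
    obtain ⟨m, rfl⟩ : ∃ m, k = m + 1 := ⟨k - 1, by omega⟩
    rw [show m + 1 - 1 = m from rfl, hH, hH, Finset.sum_Icc_succ_top (by omega)]
  -- the key pointwise formula
  have key : ∀ k ∈ Finset.Icc 1 n, ∀ ω, X k ω = if H k ≤ Sbar ω then 1 else 0 := by
    intro k hk ω
    obtain ⟨hk1, hkn⟩ := Finset.mem_Icc.mp hk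
    obtain ⟨j, hjn, hj⟩ := hsupp ω
    have hhk : 0 < h k := hpos k hk
    have hd := hdiff k hk1
    rw [hX, hj]
    by_cases hcase : k ≤ j
    · have h1 : H k ≤ H j := hmono k j hcase hjn
      rw [if_pos h1, max_eq_left (by linarith), max_eq_left (by linarith)]
      field_simp
      linarith
    · have hjk : j ≤ k - 1 := by omega
      have h1 : H j ≤ H (k - 1) := hmono j (k - 1) hjk (by omega)
      rw [if_neg (by push_neg; linarith), max_eq_right (by linarith),
        max_eq_right (by linarith)]
      simp
  refine ⟨?_, ?_, ?_, ?_⟩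
  · -- range
    intro k hk ω
    rw [key k hk ω]
    by_cases hc : H k ≤ Sbar ω <;> simp [hc]
  · -- means
    intro k hk
    obtain ⟨hk1, hkn⟩ := Finset.mem_Icc.mp hk
    have hXind : X k = Set.indicator {ω | H k ≤ Sbar ω} (fun _ => (1 : ℝ)) := by
      funext ω
      rw [key k hk ω]
      simp [Set.indicator_apply, Set.mem_setOf_eq]
    have hA : MeasurableSet {ω | H k ≤ Sbar ω} := hmeas measurableSet_Ici
    rw [hXind, MeasureTheory.integral_indicator_const (1 : ℝ) hA, smul_eq_mul, mul_one]
    -- decompose the set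
    have hAeq : {ω | H k ≤ Sbar ω} = ⋃ j ∈ Finset.Icc k n, {ω | Sbar ω = H j} := by
      ext ω
      simp only [Set.mem_setOf_eq, Set.mem_iUnion, Finset.mem_Icc, exists_prop]
      constructor
      · intro hHk
        obtain ⟨j, hjn, hj⟩ := hsupp ω
        refine ⟨j, ⟨?_, hjn⟩, hj⟩
        by_contra hc
        exact absurd (hj ▸ hHk) (not_le.mpr (hstrict j k (by omega) hkn))
      · rintro ⟨j, ⟨hkj, hjn⟩, hj⟩
        rw [hj]; exact hmono k j hkj hjn
    have hdisj : (↑(Finset.Icc k n) : Set ℕ).PairwiseDisjoint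
        (fun j => {ω | Sbar ω = H j}) := by
      intro i hi j hj hij
      simp only [Finset.coe_Icc, Set.mem_Icc] at hi hj
      refine Set.disjoint_left.mpr fun ω h1 h2 => ?_
      simp only [Set.mem_setOf_eq] at h1 h2
      rcases lt_or_gt_of_ne hij with hlt | hlt
      · exact absurd (h1 ▸ h2 ▸ rfl : H i = H j) (ne_of_lt (hstrict i j hlt hj.2))
      · exact absurd (h2 ▸ h1 ▸ rfl : H j = H i) (ne_of_lt (hstrict j i hlt hi.2))
    have hmsets : ∀ j ∈ Finset.Icc k n, MeasurableSet {ω | Sbar ω = H j} := by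
      intro j _
      exact hmeas (measurableSet_singleton (H j))
    rw [hAeq, measureReal_def, measure_biUnion_finset hdisj hmsets,
      ENNReal.toReal_sum (fun j _ => measure_ne_top _ _)]
    -- split off j = n
    have hsplit : Finset.Icc k n = insert n (Finset.Icc k (n - 1)) := by
      ext x; simp only [Finset.mem_Icc, Finset.mem_insert]; omega
    rw [hsplit, Finset.sum_insert (by simp only [Finset.mem_Icc]; omega)]
    have hPnval : (volume {ω | Sbar ω = H n}).toReal = α n := by rw [hHn]; exact hPn
    have hrest : ∀ j ∈ Finset.Icc k (n - 1),
        (volume {ω | Sbar ω = H j}).toReal = α j - α (j + 1) := by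
      intro j hj
      rw [Finset.mem_Icc] at hj
      exact hPk j (Finset.mem_Icc.mpr ⟨by omega, hj.2⟩)
    rw [hPnval, Finset.sum_congr rfl hrest, telescope_aux α (n - 1) k (by omega),
      show n - 1 + 1 = n by omega]
    ring
  · -- comonotonicity
    intro k hk ω ω' hle
    rw [key k hk ω, key k hk ω']
    by_cases hc : H k ≤ Sbar ω
    · rw [if_pos hc, if_pos (le_trans hc hle)]
    · rw [if_neg hc]
      by_cases hc' : H k ≤ Sbar ω' <;> simp [hc']
  · -- sum
    intro ω
    obtain ⟨j, hjn, hj⟩ := hsupp ω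
    have hterm : ∀ k ∈ Finset.Icc 1 n, h k * X k ω = if k ≤ j then h k else 0 := by
      intro k hk
      obtain ⟨hk1, hkn⟩ := Finset.mem_Icc.mp hk
      rw [key k hk ω, hj]
      by_cases hc : k ≤ j
      · rw [if_pos (hmono k j hc hjn), if_pos hc, mul_one]
      · rw [if_neg (not_le.mpr (hstrict j k (by omega) hkn)), if_neg hc, mul_zero]
    rw [Finset.sum_congr rfl hterm, ← Finset.sum_filter]
    have hfilt : (Finset.Icc 1 n).filter (· ≤ j) = Finset.Icc 1 j := by
      ext x; simp only [Finset.mem_filter, Finset.mem_Icc]; omega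
    rw [hfilt, hj, hH]
end

section
/- Let h₁,…,hₙ > 0 with Σ h_k = 1, α₁ > … > αₙ in (0,1], H_k = Σ_{i≤k} h_i, and let S be a random variable in [0,1] with E[S] = Σ_k h_k α_k. If π_S(H_k) ≤ Σ_{i>k} h_i α_i for all k = 1,…,n−1, then π_S(t) ≤ π_{S̄}(t) for all t ∈ [0,1], i.e., S precedes the maximally convex distribution S̄ in the convex order. -/
open MeasureTheory Set Finset

/-- If `S` is `[0,1]`-valued with `E[S] = Σ h_k α_k` and its stop-loss transform
satisfies `π_S(H_k) ≤ Σ_{i>k} h_i α_i` for `k = 1,…,n−1`, then `π_S(t) ≤ π_{S̄}(t)`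
for all `t ∈ [0,1]`, i.e. `S` precedes the maximally convex distribution `S̄` in
the convex order. -/
theorem stopLoss_le_maximallyConvex
    {Ω : Type*} [MeasureSpace Ω] [IsProbabilityMeasure (volume : Measure Ω)]
    (n : ℕ) (hn : 1 ≤ n) (h α : ℕ → ℝ)
    (hpos : ∀ i ∈ Finset.Icc 1 n, 0 < h i)
    (hsum : ∑ i ∈ Finset.Icc 1 n, h i = 1)
    (hαmem : ∀ i ∈ Finset.Icc 1 n, α i ∈ Set.Ioc (0:ℝ) 1)
    (hαdec : ∀ i ∈ Finset.Icc 1 (n - 1), α (i + 1) < α i)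
    (H : ℕ → ℝ) (hH : ∀ k, H k = ∑ i ∈ Finset.Icc 1 k, h i)
    (S : Ω → ℝ) (hSmeas : Measurable S) (hSb : ∀ ω, S ω ∈ Set.Icc (0:ℝ) 1)
    (hSmean : (∫ ω, S ω) = ∑ k ∈ Finset.Icc 1 n, h k * α k)
    (hSLT : ∀ k ∈ Finset.Icc 1 (n - 1),
      (∫ ω, max (S ω - H k) 0) ≤ ∑ i ∈ Finset.Icc (k + 1) n, h i * α i)
    (Sbar : Ω → ℝ) (hmeas : Measurable Sbar)
    (hsupp : ∀ ω, ∃ k ≤ n, Sbar ω = H k)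
    (hP0 : (volume {ω | Sbar ω = 0}).toReal = 1 - α 1)
    (hPk : ∀ k ∈ Finset.Icc 1 (n - 1),
      (volume {ω | Sbar ω = H k}).toReal = α k - α (k + 1))
    (hPn : (volume {ω | Sbar ω = 1}).toReal = α n) :
    ∀ t ∈ Set.Icc (0:ℝ) 1,
      (∫ ω, max (S ω - t) 0) ≤ ∫ ω, max (Sbar ω - t) 0 := by
  classical
  have hH0 : H 0 = 0 := by simp [hH]
  have hHn : H n = 1 := by rw [hH]; exact hsum
  -- partial-sum step
  have hstep : ∀ j k : ℕ, j ≤ k → H j + ∑ i ∈ Finset.Ioc j k, h i = H k := by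
    intro j k hjk
    have e : ∀ m : ℕ, Finset.Icc 1 m = Finset.Ioc 0 m := by
      intro m; ext x; simp [Finset.mem_Icc, Finset.mem_Ioc]; omega
    rw [hH, hH, e, e]
    exact Finset.sum_Ioc_consecutive h (Nat.zero_le _) hjk
  have hmono : ∀ j k : ℕ, j ≤ k → k ≤ n → H j ≤ H k := by
    intro j k hjk hkn
    have := hstep j k hjk
    have hnn : 0 ≤ ∑ i ∈ Finset.Ioc j k, h i := by
      apply Finset.sum_nonneg
      intro i hi
      rw [Finset.mem_Ioc] at hi
      exact (hpos i (Finset.mem_Icc.2 ⟨by omega, le_trans hi.2 hkn⟩)).le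
    linarith
  have hstrict : ∀ j k : ℕ, j < k → k ≤ n → H j < H k := by
    intro j k hjk hkn
    have := hstep j k hjk.le
    have hpo : 0 < ∑ i ∈ Finset.Ioc j k, h i := by
      apply Finset.sum_pos
      · intro i hi
        rw [Finset.mem_Ioc] at hi
        exact hpos i (Finset.mem_Icc.2 ⟨by omega, le_trans hi.2 hkn⟩)
      · exact Finset.nonempty_Ioc.2 hjk
    linarith
  have hHsucc : ∀ k : ℕ, H (k + 1) = H k + h (k + 1) := by
    intro k
    have := hstep k (k + 1) (Nat.le_succ _)
    rw [Nat.Ioc_succ_singleton, Finset.sum_singleton] at this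
    linarith
  -- masses
  set p : ℕ → ℝ := fun k => (volume {ω | Sbar ω = H k}).toReal with hp
  have hpnonneg : ∀ k, 0 ≤ p k := fun k => ENNReal.toReal_nonneg
  have hp0 : p 0 = 1 - α 1 := by rw [hp]; simp only [hH0]; exact hP0
  have hpn : p n = α n := by rw [hp]; simp only [hHn]; exact hPn
  -- tail sums of masses telescope to α
  have hT : ∀ d k : ℕ, k + d = n → 1 ≤ k → ∑ j ∈ Finset.Icc k n, p j = α k := by
    intro d
    induction d with
    | zero =>
      intro k hk h1
      have : k = n := by omega
      subst this
      rw [Finset.Icc_self, Finset.sum_singleton, hpn]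
    | succ d ih =>
      intro k hk h1
      have hkn : k < n := by omega
      have hsplit : Finset.Icc k n = insert k (Finset.Ioc k n) :=
        (Finset.Ioc_insert_left hkn.le).symm
      rw [hsplit, Finset.sum_insert (by simp), ← Finset.Icc_add_one_left_eq_Ioc,
        ih (k + 1) (by omega) (by omega)]
      have hpk' : p k = α k - α (k + 1) := hPk k (Finset.mem_Icc.2 ⟨h1, by omega⟩)
      rw [hpk']; ring
  -- the sets
  have hAmeas : ∀ j : ℕ, MeasurableSet {ω | Sbar ω = H j} := fun j =>
    hmeas (measurableSet_singleton (H j))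
  -- integral formula for Sbar
  have hint : ∀ t : ℝ, (∫ ω, max (Sbar ω - t) 0)
      = ∑ j ∈ Finset.Icc 0 n, p j * max (H j - t) 0 := by
    intro t
    have hfun : (fun ω => max (Sbar ω - t) 0)
        = fun ω => ∑ j ∈ Finset.Icc 0 n,
            Set.indicator {ω' | Sbar ω' = H j} (fun _ => max (H j - t) 0) ω := by
      funext ω
      obtain ⟨k, hk, hSk⟩ := hsupp ω
      rw [Finset.sum_eq_single_of_mem k (Finset.mem_Icc.2 ⟨Nat.zero_le _, hk⟩)]
      · rw [Set.indicator_of_mem (by exact hSk), hSk]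
      · intro j hj hjk
        apply Set.indicator_of_notMem
        intro hmem
        have hjn : j ≤ n := (Finset.mem_Icc.1 hj).2
        have : H j = H k := by rw [← hmem, hSk]
        rcases lt_or_gt_of_ne hjk with hc | hc
        · exact absurd this (hstrict j k hc hk).ne
        · exact absurd this.symm (hstrict k j hc hjn).ne
    rw [hfun, integral_finset_sum]
    · refine Finset.sum_congr rfl fun j _ => ?_
      rw [integral_indicator_const _ (hAmeas j), smul_eq_mul]
      rfl
    · intro j _
      exact (integrable_const _).indicator (hAmeas j)
  -- integrability
  have hSint : ∀ c : ℝ, Integrable (fun ω => max (S ω - c) 0) := by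
    intro c
    refine Integrable.mono' (integrable_const (1 + |c|))
      ((hSmeas.sub measurable_const).max measurable_const).aestronglyMeasurable ?_
    filter_upwards with ω
    rw [Real.norm_eq_abs, abs_of_nonneg (le_max_right _ _)]
    have h1 := (hSb ω).2
    have h2 := neg_abs_le c
    apply max_le <;> [linarith; positivity]
  -- convexity inequality for π_S
  have hconv : ∀ a b lam : ℝ, 0 ≤ lam → lam ≤ 1 →
      (∫ ω, max (S ω - ((1 - lam) * a + lam * b)) 0)
        ≤ (1 - lam) * (∫ ω, max (S ω - a) 0) + lam * ∫ ω, max (S ω - b) 0 := by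
    intro a b lam hl0 hl1
    have key : ∀ ω, max (S ω - ((1 - lam) * a + lam * b)) 0
        ≤ (1 - lam) * max (S ω - a) 0 + lam * max (S ω - b) 0 := by
      intro ω
      have h2 : S ω - ((1 - lam) * a + lam * b)
          = (1 - lam) * (S ω - a) + lam * (S ω - b) := by ring
      rw [h2]
      apply max_le
      · exact add_le_add
          (mul_le_mul_of_nonneg_left (le_max_left _ _) (by linarith))
          (mul_le_mul_of_nonneg_left (le_max_left _ _) hl0)
      · have := le_max_right (S ω - a) 0
        have := le_max_right (S ω - b) 0
        nlinarith
    calc (∫ ω, max (S ω - ((1 - lam) * a + lam * b)) 0)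
        ≤ ∫ ω, ((1 - lam) * max (S ω - a) 0 + lam * max (S ω - b) 0) :=
          integral_mono (hSint _) (((hSint a).const_mul _).add ((hSint b).const_mul _)) key
      _ = (1 - lam) * (∫ ω, max (S ω - a) 0) + lam * ∫ ω, max (S ω - b) 0 := by
          rw [integral_add ((hSint a).const_mul _) ((hSint b).const_mul _),
            integral_const_mul, integral_const_mul]
  -- π_S at grid points
  have hgrid : ∀ k : ℕ, k ≤ n →
      (∫ ω, max (S ω - H k) 0) ≤ ∑ i ∈ Finset.Icc (k + 1) n, h i * α i := by
    intro k hk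
    rcases Nat.eq_zero_or_pos k with h0 | h1
    · subst h0
      have : (fun ω => max (S ω - H 0) 0) = S := by
        funext ω
        rw [hH0, sub_zero, max_eq_left (hSb ω).1]
      rw [this, hSmean]
    · rcases eq_or_lt_of_le hk with he | hlt
      · subst he
        have : (fun ω => max (S ω - H k) 0) = fun _ => (0 : ℝ) := by
          funext ω
          rw [hHn, max_eq_right (by linarith [(hSb ω).2])]
        rw [this, integral_zero]
        rw [Finset.Icc_eq_empty (by omega), Finset.sum_empty]
      · exact hSLT k (Finset.mem_Icc.2 ⟨h1, by omega⟩)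
  -- reduce π_Sbar grid sums
  have hW : ∀ k : ℕ, k ≤ n → ∑ j ∈ Finset.Icc 0 n, p j * max (H j - H k) 0
      = ∑ j ∈ Finset.Icc (k + 1) n, p j * (H j - H k) := by
    intro k hk
    rw [← Finset.sum_subset (Finset.Icc_subset_Icc (Nat.zero_le _) le_rfl)]
    · refine Finset.sum_congr rfl fun j hj => ?_
      rw [Finset.mem_Icc] at hj
      rw [max_eq_left (sub_nonneg.2 (hmono k j (by omega) hj.2))]
    · intro j hj hj'
      rw [Finset.mem_Icc] at hj
      rw [Finset.mem_Icc] at hj'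
      have : j ≤ k := by omega
      rw [max_eq_right (sub_nonpos.2 (hmono j k this hk)), mul_zero]
  -- grid sums equal tail means
  have hWV : ∀ d k : ℕ, k + d = n →
      ∑ j ∈ Finset.Icc 0 n, p j * max (H j - H k) 0
        = ∑ i ∈ Finset.Icc (k + 1) n, h i * α i := by
    intro d
    induction d with
    | zero =>
      intro k hk
      have hke : k = n := by omega
      rw [hke, hW n le_rfl, Finset.Icc_eq_empty (by omega)]
      simp
    | succ d ih =>
      intro k hk
      have hkn : k < n := by omega
      rw [hW k hkn.le]
      have e1 : ∀ j ∈ Finset.Icc (k + 1) n,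
          p j * (H j - H k) = p j * (H j - H (k + 1)) + p j * h (k + 1) := by
        intro j _
        rw [hHsucc k]; ring
      rw [Finset.sum_congr rfl e1, Finset.sum_add_distrib, ← Finset.sum_mul,
        hT d (k + 1) (by omega) (by omega)]
      have e2 : ∑ j ∈ Finset.Icc (k + 1) n, p j * (H j - H (k + 1))
          = ∑ j ∈ Finset.Icc (k + 2) n, p j * (H j - H (k + 1)) := by
        refine (Finset.sum_subset
          (Finset.Icc_subset_Icc (Nat.le_succ (k + 1)) le_rfl :
            Finset.Icc (k + 2) n ⊆ Finset.Icc (k + 1) n) ?_).symm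
        intro j hj hj'
        rw [Finset.mem_Icc] at hj
        rw [Finset.mem_Icc] at hj'
        have : j = k + 1 := by omega
        subst this
        rw [sub_self, mul_zero]
      rw [e2, ← hW (k + 1) (by omega), ih (k + 1) (by omega)]
      have e3 : Finset.Icc (k + 1) n = insert (k + 1) (Finset.Icc (k + 2) n) := by
        ext x; simp [Finset.mem_Icc, Finset.mem_insert]; omega
      rw [e3, Finset.sum_insert (by simp)]
      ring
  -- main argument
  intro t ht
  set k := Nat.findGreatest (fun j => H j ≤ t) (n - 1) with hkdef
  have hkle : k ≤ n - 1 := Nat.findGreatest_le _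
  have hk1 : H k ≤ t := by
    have := Nat.findGreatest_spec (P := fun j => H j ≤ t) (m := 0) (n := n - 1)
      (Nat.zero_le _) (by show H 0 ≤ t; rw [hH0]; exact ht.1)
    exact this
  have hk2 : t ≤ H (k + 1) := by
    rcases eq_or_lt_of_le hkle with he | hlt
    · have : k + 1 = n := by omega
      rw [this, hHn]; exact ht.2
    · have := Nat.findGreatest_is_greatest (P := fun j => H j ≤ t) (n := n - 1)
        (k := k + 1) (Nat.lt_succ_self k) (by omega)
      exact (not_le.1 this).le
  have hkn : k + 1 ≤ n := by omega
  have hhpos : 0 < h (k + 1) := hpos (k + 1) (Finset.mem_Icc.2 ⟨by omega, hkn⟩)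
  set lam : ℝ := (t - H k) / h (k + 1) with hlamdef
  have hlam0 : 0 ≤ lam := div_nonneg (by linarith) hhpos.le
  have hlam1 : lam ≤ 1 := by
    rw [hlamdef, div_le_one hhpos]
    have := hHsucc k
    linarith
  have hlmul : lam * h (k + 1) = t - H k := by
    rw [hlamdef, div_mul_cancel₀ _ hhpos.ne']
  have hrepr : t = (1 - lam) * H k + lam * H (k + 1) := by
    rw [hHsucc k]; nlinarith [hlmul]
  calc (∫ ω, max (S ω - t) 0)
      = ∫ ω, max (S ω - ((1 - lam) * H k + lam * H (k + 1))) 0 := by rw [← hrepr]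
    _ ≤ (1 - lam) * (∫ ω, max (S ω - H k) 0)
        + lam * ∫ ω, max (S ω - H (k + 1)) 0 := hconv _ _ _ hlam0 hlam1
    _ ≤ (1 - lam) * (∑ i ∈ Finset.Icc (k + 1) n, h i * α i)
        + lam * ∑ i ∈ Finset.Icc (k + 2) n, h i * α i := by
        refine add_le_add
          (mul_le_mul_of_nonneg_left (hgrid k (by omega)) (by linarith))
          (mul_le_mul_of_nonneg_left ?_ hlam0)
        exact hgrid (k + 1) hkn
    _ = (1 - lam) * (∑ j ∈ Finset.Icc 0 n, p j * max (H j - H k) 0)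
        + lam * ∑ j ∈ Finset.Icc 0 n, p j * max (H j - H (k + 1)) 0 := by
        rw [hWV (n - k) k (by omega), hWV (n - (k + 1)) (k + 1) (by omega)]
    _ = ∑ j ∈ Finset.Icc 0 n, p j * max (H j - t) 0 := by
        rw [Finset.mul_sum, Finset.mul_sum, ← Finset.sum_add_distrib]
        refine Finset.sum_congr rfl fun j hj => ?_
        rw [Finset.mem_Icc] at hj
        rcases le_or_gt j k with hjk | hjk
        · have e1 : H j ≤ H k := hmono j k hjk (by omega)
          have e2 : H j ≤ H (k + 1) := hmono j (k + 1) (by omega) hkn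
          rw [max_eq_right (by linarith), max_eq_right (by linarith),
            max_eq_right (by linarith)]
          ring
        · have e1 : H (k + 1) ≤ H j := hmono (k + 1) j hjk hj.2
          have e2 : H k ≤ H j := hmono k j (by omega) hj.2
          rw [max_eq_left (by linarith), max_eq_left (by linarith),
            max_eq_left (by linarith)]
          rw [hrepr]; ring
    _ = ∫ ω, max (Sbar ω - t) 0 := (hint t).symm
end

section
/- Let S be a [0,1]-valued random variable, and for v ∈ [0,1], h ∈ (0, 1−v fixed] define g(v) = E[φ(S; v, h)] = π_S(0) − π_S(v) + π_S(v + h). Then g is continuous and nondecreasing on [0, 1−h]. Consequently, if π_S(h) ≤ c and π_S(0) − π_S(1−h) ≥ c for some constant c ≥ 0 (with π_S(1) = 0), there exists v* ∈ [0, 1−h] with π_S(v*) − π_S(v* + h) = π_S(0) − c. -/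
open MeasureTheory Set

section Aux

variable {Ω : Type*} [MeasureSpace Ω] [IsProbabilityMeasure (volume : Measure Ω)]

lemma aux_int_max (S : Ω → ℝ) (hS : Measurable S) (hSb : ∀ ω, S ω ∈ Icc (0:ℝ) 1)
    (t : ℝ) : Integrable (fun ω => max (S ω - t) 0) := by
  refine (integrable_const (1 + |t|)).mono'
    ((hS.sub measurable_const).max measurable_const).aestronglyMeasurable
    (ae_of_all _ fun ω => ?_)
  have h1 := (hSb ω).1
  have h2 := (hSb ω).2
  have h3 : |t| ≥ -t := neg_le_abs t
  rw [Real.norm_eq_abs, abs_of_nonneg (le_max_right _ _)]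
  exact max_le (by linarith) (by linarith [abs_nonneg t])

lemma aux_pi_lip (S : Ω → ℝ) (hS : Measurable S) (hSb : ∀ ω, S ω ∈ Icc (0:ℝ) 1)
    (π : ℝ → ℝ) (hπ : ∀ t, π t = ∫ ω, max (S ω - t) 0) :
    Continuous π := by
  have lip : LipschitzWith 1 π := by
    refine LipschitzWith.of_dist_le_mul fun t t' => ?_
    rw [Real.dist_eq, Real.dist_eq, NNReal.coe_one, one_mul, hπ t, hπ t',
      ← integral_sub (aux_int_max S hS hSb t) (aux_int_max S hS hSb t')]
    calc |∫ ω, (max (S ω - t) 0 - max (S ω - t') 0)|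
        ≤ ∫ ω, |max (S ω - t) 0 - max (S ω - t') 0| := by
            simpa [Real.norm_eq_abs] using
              norm_integral_le_integral_norm fun ω => max (S ω - t) 0 - max (S ω - t') 0
      _ ≤ ∫ (_ : Ω), |t - t'| := by
          refine integral_mono ((aux_int_max S hS hSb t).sub
            (aux_int_max S hS hSb t')).abs (integrable_const _) fun ω => ?_
          have := abs_max_sub_max_le_abs (S ω - t) (S ω - t') 0
          calc |max (S ω - t) 0 - max (S ω - t') 0| ≤ |S ω - t - (S ω - t')| := this
            _ = |t' - t| := by ring_nf
            _ = |t - t'| := abs_sub_comm t' t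
      _ = |t - t'| := by simp
  exact lip.continuous

end Aux

/-- For `g(v) = E[φ(S; v, h)] = π_S(0) − π_S(v) + π_S(v+h)`: `g` is continuous and
nondecreasing on `[0, 1−h]`; consequently, if `π_S(h) ≤ c` and
`π_S(0) − π_S(1−h) ≥ c` for some `c ≥ 0`, there exists `v* ∈ [0, 1−h]` with
`π_S(v*) − π_S(v*+h) = π_S(0) − c`. -/
theorem greedy_expectation_intermediate_value
    {Ω : Type*} [MeasureSpace Ω] [IsProbabilityMeasure (volume : Measure Ω)]
    (S : Ω → ℝ) (hS : Measurable S) (hSb : ∀ ω, S ω ∈ Icc (0:ℝ) 1)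
    (hz : ℝ) (hz0 : 0 < hz) (hz1 : hz ≤ 1)
    (φ : ℝ → ℝ → ℝ)
    (hφ : ∀ v s, φ v s = if s ≤ v then s else if s ≤ v + hz then v else s - hz)
    (π : ℝ → ℝ) (hπ : ∀ t, π t = ∫ ω, max (S ω - t) 0)
    (g : ℝ → ℝ) (hg : ∀ v, g v = ∫ ω, φ v (S ω)) :
    (∀ v ∈ Icc (0:ℝ) (1 - hz), g v = π 0 - π v + π (v + hz)) ∧
    ContinuousOn g (Icc (0:ℝ) (1 - hz)) ∧
    MonotoneOn g (Icc (0:ℝ) (1 - hz)) ∧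
    (∀ c : ℝ, 0 ≤ c → π hz ≤ c → c ≤ π 0 - π (1 - hz) →
      ∃ v ∈ Icc (0:ℝ) (1 - hz), π v - π (v + hz) = π 0 - c) := by
  -- pointwise identity
  have key : ∀ v ω, φ v (S ω) =
      max (S ω - 0) 0 - max (S ω - v) 0 + max (S ω - (v + hz)) 0 := by
    intro v ω
    have h0 := (hSb ω).1
    rw [hφ]
    split_ifs with h1 h2
    · rw [max_eq_left (by linarith), max_eq_right (by linarith),
        max_eq_right (by linarith)]; ring
    · rw [max_eq_left (by linarith), max_eq_left (by linarith),
        max_eq_right (by linarith)]; ring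
    · rw [max_eq_left (by linarith), max_eq_left (by linarith),
        max_eq_left (by linarith)]; ring
  -- g formula (for all v)
  have geq : ∀ v, g v = π 0 - π v + π (v + hz) := by
    intro v
    rw [hg, hπ, hπ, hπ]
    calc (∫ ω, φ v (S ω))
        = ∫ ω, (max (S ω - 0) 0 - max (S ω - v) 0 + max (S ω - (v + hz)) 0) := by
          exact integral_congr_ae (ae_of_all _ fun ω => key v ω)
      _ = (∫ ω, max (S ω - 0) 0) - (∫ ω, max (S ω - v) 0)
            + ∫ ω, max (S ω - (v + hz)) 0 := by
          rw [← integral_sub (aux_int_max S hS hSb 0) (aux_int_max S hS hSb v),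
            ← integral_add (show Integrable (fun ω => max (S ω - 0) 0 - max (S ω - v) 0) volume
                from (aux_int_max S hS hSb 0).sub (aux_int_max S hS hSb v))
              (aux_int_max S hS hSb (v + hz))]
  have hπc : Continuous π := aux_pi_lip S hS hSb π hπ
  have hgc : ContinuousOn g (Icc (0:ℝ) (1 - hz)) := by
    have : Continuous fun v => π 0 - π v + π (v + hz) :=
      (continuous_const.sub hπc).add (hπc.comp (continuous_add_right hz))
    exact this.continuousOn.congr fun v _ => geq v
  -- integrability of φ
  have intφ : ∀ v, Integrable (fun ω => φ v (S ω)) := by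
    intro v
    have : (fun ω => φ v (S ω)) =
        fun ω => max (S ω - 0) 0 - max (S ω - v) 0 + max (S ω - (v + hz)) 0 :=
      funext fun ω => key v ω
    rw [this]
    exact ((aux_int_max S hS hSb 0).sub (aux_int_max S hS hSb v)).add
      (aux_int_max S hS hSb (v + hz))
  have hgm : MonotoneOn g (Icc (0:ℝ) (1 - hz)) := by
    intro v _ v' _ hvv'
    rw [hg, hg]
    refine integral_mono (intφ v) (intφ v') fun ω => ?_
    simp only [hφ]
    split_ifs <;> linarith
  refine ⟨fun v _ => geq v, hgc, hgm, fun c hc0 hc1 hc2 => ?_⟩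
  have hle : (0:ℝ) ≤ 1 - hz := by linarith
  have hπ1 : π 1 = 0 := by
    rw [hπ]
    have : (fun ω => max (S ω - 1) 0) = fun _ => (0:ℝ) :=
      funext fun ω => max_eq_right (by linarith [(hSb ω).2])
    rw [this, integral_zero]
  have hg0 : g 0 = π hz := by rw [geq 0]; simp
  have hg1 : g (1 - hz) = π 0 - π (1 - hz) := by
    rw [geq (1 - hz)]
    have : 1 - hz + hz = 1 := by ring
    rw [this, hπ1]; ring
  have hmem : c ∈ Icc (g 0) (g (1 - hz)) := by
    rw [hg0, hg1]; exact ⟨hc1, hc2⟩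
  obtain ⟨v, hv, hgv⟩ := intermediate_value_Icc hle hgc hmem
  refine ⟨v, hv, ?_⟩
  have := geq v
  rw [hgv] at this
  linarith
end

section
/- For the maximally convex distribution S̄ with support {0, H₁,…,H_{n−1}, 1} and masses {1−α₁, α₁−α₂,…,α_{n−1}−αₙ, αₙ} (α₁ ≥ … ≥ αₙ), the variance satisfies Var(S̄) = Σ_{i=1}^n Σ_{j=1}^n h_i h_j (min(α_i, α_j) − α_i α_j). -/
open MeasureTheory ProbabilityTheory Set Finset

private lemma abel_sum_aux (A c : ℕ → ℝ) (m : ℕ) :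
    ∑ k ∈ Finset.range (m + 1), c k * (A k - A (k + 1))
      = c 0 * A 0 - c m * A (m + 1)
        + ∑ k ∈ Finset.Icc 1 m, (c k - c (k - 1)) * A k := by
  induction m with
  | zero => simp; ring
  | succ m ih =>
    rw [Finset.sum_range_succ, ih, Finset.sum_Icc_succ_top (by omega : 1 ≤ m + 1)]
    simp only [Nat.add_sub_cancel]
    ring

/-- Variance of the maximally convex distribution:
`Var(S̄) = Σ_i Σ_j h_i h_j (min(α_i, α_j) − α_i α_j)`. -/
theorem variance_maximallyConvex
    {Ω : Type*} [MeasureSpace Ω] [IsProbabilityMeasure (volume : Measure Ω)]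
    (n : ℕ) (hn : 1 ≤ n) (h α : ℕ → ℝ)
    (hpos : ∀ i ∈ Finset.Icc 1 n, 0 < h i)
    (hsum : ∑ i ∈ Finset.Icc 1 n, h i = 1)
    (hαmem : ∀ i ∈ Finset.Icc 1 n, α i ∈ Set.Icc (0:ℝ) 1)
    (hαdec : ∀ i ∈ Finset.Icc 1 (n - 1), α (i + 1) ≤ α i)
    (H : ℕ → ℝ) (hH : ∀ k, H k = ∑ i ∈ Finset.Icc 1 k, h i)
    (A : ℕ → ℝ) (hA : ∀ j, A j = if j = 0 then 1 else if j ≤ n then α j else 0)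
    (Sbar : Ω → ℝ) (hmeas : Measurable Sbar)
    (hsupp : ∀ ω, ∃ k ≤ n, Sbar ω = H k)
    (hP : ∀ k ≤ n, (volume {ω | Sbar ω = H k}).toReal = A k - A (k + 1)) :
    variance Sbar (volume : Measure Ω)
      = ∑ i ∈ Finset.Icc 1 n, ∑ j ∈ Finset.Icc 1 n,
          h i * h j * (min (α i) (α j) - α i * α j) := by
  set μ : Measure Ω := volume with hμ
  -- basic facts about H
  have hH0 : H 0 = 0 := by rw [hH]; simp
  have hIcc : ∀ k : ℕ, Finset.Icc 1 k = Finset.Ioc 0 k := by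
    intro k; ext i; simp [Nat.lt_iff_add_one_le]
  have hHmono : ∀ k l : ℕ, k < l → l ≤ n → H k < H l := by
    intro k l hkl hln
    have hsplit : H l = H k + ∑ i ∈ Finset.Ioc k l, h i := by
      rw [hH, hH, hIcc, hIcc, ← Finset.sum_Ioc_consecutive _ (Nat.zero_le k) hkl.le]
    have hpos' : 0 < ∑ i ∈ Finset.Ioc k l, h i := by
      refine Finset.sum_pos (fun i hi => hpos i ?_) ⟨l, by simp [hkl]⟩
      simp only [Finset.mem_Ioc] at hi
      simp only [Finset.mem_Icc]; omega
    rw [hsplit]; linarith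
  have hHinj : ∀ k l : ℕ, k ≤ n → l ≤ n → H k = H l → k = l := by
    intro k l hk hl he
    by_contra hne
    rcases Nat.lt_or_ge k l with hlt | hge
    · exact absurd he (ne_of_lt (hHmono k l hlt hl))
    · exact absurd he.symm (ne_of_lt (hHmono l k (by omega) hk))
  have hdiff : ∀ k : ℕ, 1 ≤ k → H k = H (k - 1) + h k := by
    intro k hk
    obtain ⟨m, rfl⟩ : ∃ m, k = m + 1 := ⟨k - 1, by omega⟩
    simp only [Nat.add_sub_cancel]
    rw [hH, hH, Finset.sum_Icc_succ_top (by omega : 1 ≤ m + 1)]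
  -- the level sets
  set s : ℕ → Set Ω := fun k => {ω | Sbar ω = H k} with hs
  have hsmeas : ∀ k, MeasurableSet (s k) := fun k =>
    hmeas (measurableSet_singleton (H k))
  -- integral of any g ∘ Sbar
  have key : ∀ g : ℝ → ℝ, ∫ ω, g (Sbar ω) ∂μ
      = ∑ k ∈ Finset.range (n + 1), g (H k) * (μ (s k)).toReal := by
    intro g
    have hfun : ∀ ω, g (Sbar ω)
        = ∑ k ∈ Finset.range (n + 1), (s k).indicator (fun _ => g (H k)) ω := by
      intro ω
      obtain ⟨k₀, hk₀n, hk₀⟩ := hsupp ω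
      have hmem : ω ∈ s k₀ := hk₀
      rw [Finset.sum_eq_single k₀]
      · rw [Set.indicator_of_mem hmem, hk₀]
      · intro k hk hne
        refine Set.indicator_of_notMem (fun hm => hne ?_) _
        have : H k = H k₀ := by
          have h1 : Sbar ω = H k := hm
          rw [← h1, hk₀]
        exact hHinj k k₀ (by simp only [Finset.mem_range] at hk; omega) hk₀n this
      · intro habs
        exact absurd (Finset.mem_range.2 (by omega)) habs
    calc ∫ ω, g (Sbar ω) ∂μ
        = ∫ ω, ∑ k ∈ Finset.range (n + 1), (s k).indicator (fun _ => g (H k)) ω ∂μ := by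
          simp_rw [hfun]
      _ = ∑ k ∈ Finset.range (n + 1), ∫ ω, (s k).indicator (fun _ => g (H k)) ω ∂μ := by
          refine integral_finset_sum _ (fun k _ => ?_)
          exact (integrable_const _).indicator (hsmeas k)
      _ = ∑ k ∈ Finset.range (n + 1), g (H k) * (μ (s k)).toReal := by
          refine Finset.sum_congr rfl fun k _ => ?_
          rw [integral_indicator_const _ (hsmeas k)]
          simp [mul_comm, measureReal_def]
  -- moments via Abel summation
  have hmoment : ∀ c : ℕ → ℝ, c 0 = 0 →
      ∑ k ∈ Finset.range (n + 1), c k * (μ (s k)).toReal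
        = ∑ k ∈ Finset.Icc 1 n, (c k - c (k - 1)) * α k := by
    intro c hc0
    have hcong : ∀ k ∈ Finset.range (n + 1),
        c k * (μ (s k)).toReal = c k * (A k - A (k + 1)) := by
      intro k hk
      rw [hP k (by simp only [Finset.mem_range] at hk; omega)]
    rw [Finset.sum_congr rfl hcong, abel_sum_aux, hc0]
    have hAn1 : A (n + 1) = 0 := by
      rw [hA, if_neg (by omega), if_neg (by omega)]
    rw [hAn1]
    simp only [mul_zero, zero_mul, sub_zero, zero_add]
    refine Finset.sum_congr rfl fun k hk => ?_
    have hk' := Finset.mem_Icc.1 hk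
    rw [hA, if_neg (by omega), if_pos hk'.2]
  -- membership in L²
  have hbound : ∀ ω, |Sbar ω| ≤ ∑ k ∈ Finset.range (n + 1), |H k| := by
    intro ω
    obtain ⟨k₀, hk₀n, hk₀⟩ := hsupp ω
    rw [hk₀]
    exact Finset.single_le_sum (fun i _ => abs_nonneg (H i))
      (Finset.mem_range.2 (by omega))
  have hmem2 : MemLp Sbar 2 μ :=
    MemLp.of_bound hmeas.aestronglyMeasurable _
      (ae_of_all _ fun ω => by simpa using hbound ω)
  -- first and second moments
  have hE1 : ∫ ω, Sbar ω ∂μ = ∑ k ∈ Finset.Icc 1 n, h k * α k := by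
    rw [show (fun ω => Sbar ω) = fun ω => id (Sbar ω) from rfl, key id]
    simp only [id_eq]
    rw [hmoment H hH0]
    refine Finset.sum_congr rfl fun k hk => ?_
    have hk' := Finset.mem_Icc.1 hk
    rw [hdiff k hk'.1]; ring
  have hE2 : ∫ ω, Sbar ω ^ 2 ∂μ
      = ∑ k ∈ Finset.Icc 1 n, h k * (H k + H (k - 1)) * α k := by
    have hm2 := hmoment (fun k => H k ^ 2) (by show H 0 ^ 2 = 0; rw [hH0]; ring)
    rw [show (fun ω => Sbar ω ^ 2) = fun ω => (fun x => x ^ 2) (Sbar ω) from rfl,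
      key (fun x => x ^ 2)]
    rw [hm2]
    refine Finset.sum_congr rfl fun k hk => ?_
    have hk' := Finset.mem_Icc.1 hk
    rw [hdiff k hk'.1]; ring
  -- monotonicity of α
  have hαmono : ∀ i j : ℕ, 1 ≤ i → i ≤ j → j ≤ n → α j ≤ α i := by
    intro i j hi hij hjn
    induction j with
    | zero => omega
    | succ m ih =>
      rcases Nat.lt_or_ge i (m + 1) with hlt | hge
      · have h1 : α (m + 1) ≤ α m :=
          hαdec m (Finset.mem_Icc.2 ⟨by omega, by omega⟩)
        exact le_trans h1 (ih (by omega) (by omega))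
      · have : i = m + 1 := by omega
        rw [this]
  have hmin : ∀ i j : ℕ, i ∈ Finset.Icc 1 n → j ∈ Finset.Icc 1 n →
      min (α i) (α j) = if j ≤ i then α i else α j := by
    intro i j hi hj
    have hi' := Finset.mem_Icc.1 hi
    have hj' := Finset.mem_Icc.1 hj
    by_cases hc : j ≤ i
    · rw [if_pos hc]; exact min_eq_left (hαmono j i hj'.1 hc hi'.2)
    · rw [if_neg hc]; exact min_eq_right (hαmono i j hi'.1 (by omega) hj'.2)
  -- the double sum with the min
  have hT : ∑ i ∈ Finset.Icc 1 n, ∑ j ∈ Finset.Icc 1 n, h i * h j * min (α i) (α j)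
      = ∑ k ∈ Finset.Icc 1 n, h k * (H k + H (k - 1)) * α k := by
    have step1 : ∀ i ∈ Finset.Icc 1 n,
        ∑ j ∈ Finset.Icc 1 n, h i * h j * min (α i) (α j)
          = h i * α i * H i + ∑ j ∈ Finset.Icc (i + 1) n, h i * h j * α j := by
      intro i hi
      have hi' := Finset.mem_Icc.1 hi
      have hsplit : ∀ j ∈ Finset.Icc 1 n,
          h i * h j * min (α i) (α j)
            = if j ≤ i then h i * h j * α i else h i * h j * α j := by
        intro j hj
        rw [hmin i j hi hj]
        by_cases hc : j ≤ i
        · rw [if_pos hc, if_pos hc]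
        · rw [if_neg hc, if_neg hc]
      rw [Finset.sum_congr rfl hsplit, Finset.sum_ite]
      have hf1 : (Finset.Icc 1 n).filter (fun j => j ≤ i) = Finset.Icc 1 i := by
        ext j
        simp only [Finset.mem_filter, Finset.mem_Icc]
        omega
      have hf2 : (Finset.Icc 1 n).filter (fun j => ¬ j ≤ i) = Finset.Icc (i + 1) n := by
        ext j
        simp only [Finset.mem_filter, Finset.mem_Icc]
        omega
      rw [hf1, hf2]
      congr 1
      rw [hH i, Finset.mul_sum]
      exact Finset.sum_congr rfl fun j _ => by ring
    rw [Finset.sum_congr rfl step1, Finset.sum_add_distrib]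
    have swap : ∑ i ∈ Finset.Icc 1 n, ∑ j ∈ Finset.Icc (i + 1) n, h i * h j * α j
        = ∑ j ∈ Finset.Icc 1 n, h j * α j * H (j - 1) := by
      have e1 : ∀ i ∈ Finset.Icc 1 n,
          ∑ j ∈ Finset.Icc (i + 1) n, h i * h j * α j
            = ∑ j ∈ Finset.Icc 1 n, if i < j then h i * h j * α j else 0 := by
        intro i hi
        rw [Finset.sum_ite, Finset.sum_const_zero, add_zero]
        refine Finset.sum_congr ?_ (fun _ _ => rfl)
        ext j
        simp only [Finset.mem_filter, Finset.mem_Icc]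
        omega
      rw [Finset.sum_congr rfl e1, Finset.sum_comm]
      refine Finset.sum_congr rfl fun j hj => ?_
      have hj' := Finset.mem_Icc.1 hj
      rw [Finset.sum_ite, Finset.sum_const_zero, add_zero]
      have hf : (Finset.Icc 1 n).filter (fun i => i < j) = Finset.Icc 1 (j - 1) := by
        ext i
        simp only [Finset.mem_filter, Finset.mem_Icc]
        omega
      rw [hf, hH (j - 1), Finset.mul_sum]
      refine Finset.sum_congr rfl fun i _ => by ring
    rw [swap, ← Finset.sum_add_distrib]
    refine Finset.sum_congr rfl fun k _ => by ring
  -- assemble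
  rw [variance_eq_sub hmem2]
  have hpow : (μ[Sbar ^ 2] : ℝ) = ∫ ω, Sbar ω ^ 2 ∂μ := by
    congr 1
  rw [hpow, hE2, hE1]
  have hsq : (∑ k ∈ Finset.Icc 1 n, h k * α k) ^ 2
      = ∑ i ∈ Finset.Icc 1 n, ∑ j ∈ Finset.Icc 1 n, (h i * α i) * (h j * α j) := by
    rw [sq, Finset.sum_mul_sum]
  rw [hsq, ← hT]
  rw [← Finset.sum_sub_distrib]
  refine Finset.sum_congr rfl fun i _ => ?_
  rw [← Finset.sum_sub_distrib]
  refine Finset.sum_congr rfl fun j _ => by ring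
end

section
/- Let h₁,…,hₙ > 0 with Σ h_k = 1 and α₁ > … > αₙ in (0,1]. If S is a [0,1]-valued random variable with E[S] = Σ_k h_k α_k and π_S(H_k) ≤ Σ_{i>k} h_i α_i for k = 1,…,n−1, then Var(S) ≤ Σ_{i,j} h_i h_j (min(α_i, α_j) − α_i α_j). -/
open MeasureTheory ProbabilityTheory Set Finset

lemma aux_sq_integral_max {x : ℝ} (h0 : 0 ≤ x) (h1 : x ≤ 1) :
    ∫ t in (0:ℝ)..1, max (x - t) 0 = x ^ 2 / 2 := by
  have hcont : Continuous fun t : ℝ => max (x - t) 0 :=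
    (continuous_const.sub continuous_id).max continuous_const
  have hsplit := intervalIntegral.integral_add_adjacent_intervals
    (a := (0:ℝ)) (b := x) (c := 1) (f := fun t => max (x - t) 0) (μ := volume)
    (hcont.intervalIntegrable _ _) (hcont.intervalIntegrable _ _)
  have e1 : (∫ t in (0:ℝ)..x, max (x - t) 0) = x ^ 2 / 2 := by
    have : (∫ t in (0:ℝ)..x, max (x - t) 0) = ∫ t in (0:ℝ)..x, (x - t) := by
      apply intervalIntegral.integral_congr
      intro t ht
      rw [Set.uIcc_of_le h0] at ht
      exact max_eq_left (by linarith [ht.2])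
    rw [this, intervalIntegral.integral_sub (intervalIntegrable_const)
      intervalIntegral.intervalIntegrable_id, intervalIntegral.integral_const, integral_id]
    simp; ring
  have e2 : (∫ t in x..(1:ℝ), max (x - t) 0) = 0 := by
    have : (∫ t in x..(1:ℝ), max (x - t) 0) = ∫ t in x..(1:ℝ), (0:ℝ) := by
      apply intervalIntegral.integral_congr
      intro t ht
      rw [Set.uIcc_of_le h1] at ht
      exact max_eq_right (by linarith [ht.1])
    rw [this]; simp
  rw [← hsplit, e1, e2, add_zero]

lemma aux_chord_le {f : ℝ → ℝ} (hf : ConvexOn ℝ Set.univ f) {a b t : ℝ} (hab : a < b)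
    (h1 : a ≤ t) (h2 : t ≤ b) :
    f t ≤ ((b - t) * f a + (t - a) * f b) / (b - a) := by
  have hba : (0:ℝ) < b - a := by linarith
  have key := hf.2 (Set.mem_univ a) (Set.mem_univ b)
    (div_nonneg (by linarith : (0:ℝ) ≤ b - t) hba.le)
    (div_nonneg (by linarith : (0:ℝ) ≤ t - a) hba.le)
    (by field_simp; ring)
  have harg : ((b - t)/(b - a)) • a + ((t - a)/(b - a)) • b = t := by
    simp only [smul_eq_mul]; field_simp; ring
  rw [harg] at key
  calc f t ≤ ((b - t)/(b - a)) • f a + ((t - a)/(b - a)) • f b := key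
    _ = ((b - t) * f a + (t - a) * f b) / (b - a) := by
        simp only [smul_eq_mul]; field_simp; try ring

lemma aux_integral_chord (fa fb a b : ℝ) (hab : a < b) :
    ∫ t in a..b, ((b - t) * fa + (t - a) * fb) / (b - a) = (b - a) * (fa + fb) / 2 := by
  have hba : (0:ℝ) < b - a := by linarith
  have heq : (fun t : ℝ => ((b - t) * fa + (t - a) * fb) / (b - a))
      = fun t : ℝ => (b * fa - a * fb)/(b - a) + ((fb - fa)/(b - a)) * t := by
    funext t; field_simp; ring
  rw [heq, intervalIntegral.integral_add (intervalIntegrable_const)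
    (intervalIntegral.intervalIntegrable_id.const_mul _),
    intervalIntegral.integral_const_mul, integral_id, intervalIntegral.integral_const]
  simp only [smul_eq_mul]
  field_simp
  ring

/-- Maximum-variance bound: if `S ∈ [0,1]` with `E[S] = Σ h_k α_k` and
`π_S(H_k) ≤ Σ_{i>k} h_i α_i` for `k = 1,…,n−1`, then
`Var(S) ≤ Σ_{i,j} h_i h_j (min(α_i,α_j) − α_i α_j)`. -/
theorem variance_le_maxVar
    {Ω : Type*} [MeasureSpace Ω] [IsProbabilityMeasure (volume : Measure Ω)]
    (n : ℕ) (hn : 1 ≤ n) (h α : ℕ → ℝ)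
    (hpos : ∀ i ∈ Finset.Icc 1 n, 0 < h i)
    (hsum : ∑ i ∈ Finset.Icc 1 n, h i = 1)
    (hαmem : ∀ i ∈ Finset.Icc 1 n, α i ∈ Set.Ioc (0:ℝ) 1)
    (hαdec : ∀ i ∈ Finset.Icc 1 (n - 1), α (i + 1) < α i)
    (H : ℕ → ℝ) (hH : ∀ k, H k = ∑ i ∈ Finset.Icc 1 k, h i)
    (S : Ω → ℝ) (hSmeas : Measurable S) (hSb : ∀ ω, S ω ∈ Set.Icc (0:ℝ) 1)
    (hSmean : (∫ ω, S ω) = ∑ k ∈ Finset.Icc 1 n, h k * α k)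
    (hSLT : ∀ k ∈ Finset.Icc 1 (n - 1),
      (∫ ω, max (S ω - H k) 0) ≤ ∑ i ∈ Finset.Icc (k + 1) n, h i * α i) :
    variance S (volume : Measure Ω)
      ≤ ∑ i ∈ Finset.Icc 1 n, ∑ j ∈ Finset.Icc 1 n,
          h i * h j * (min (α i) (α j) - α i * α j) := by
  have hS0 : ∀ ω, 0 ≤ S ω := fun ω => (hSb ω).1
  have hS1 : ∀ ω, S ω ≤ 1 := fun ω => (hSb ω).2
  set f : ℝ → ℝ := fun t => ∫ ω, max (S ω - t) 0 with hf_def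
  set m : ℕ → ℝ := fun k => ∑ i ∈ Finset.Icc (k+1) n, h i * α i with hm_def
  -- integrability
  have hint : ∀ t : ℝ, Integrable (fun ω => max (S ω - t) 0) volume := by
    intro t
    apply (integrable_const (1 + |t|)).mono'
      ((hSmeas.sub measurable_const).max measurable_const).aestronglyMeasurable
    filter_upwards with ω
    rw [Real.norm_eq_abs, abs_of_nonneg (le_max_right _ _)]
    have h1 : S ω - t ≤ 1 + |t| := by
      have := neg_abs_le t; have := hS1 ω; linarith
    exact max_le h1 (by positivity)
  -- antitone
  have hf_anti : Antitone f := by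
    intro s t hst
    apply integral_mono (hint t) (hint s)
    intro ω
    exact max_le_max (by linarith) le_rfl
  -- convexity
  have hf_cvx : ConvexOn ℝ Set.univ f := by
    refine ⟨convex_univ, ?_⟩
    intro a _ b _ p q hp hq hpq
    simp only [smul_eq_mul]
    have ptw : ∀ ω, max (S ω - (p*a+q*b)) 0
        ≤ p * max (S ω - a) 0 + q * max (S ω - b) 0 := by
      intro ω
      have l1 : p * (S ω - a) ≤ p * max (S ω - a) 0 :=
        mul_le_mul_of_nonneg_left (le_max_left _ _) hp
      have l2 : q * (S ω - b) ≤ q * max (S ω - b) 0 :=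
        mul_le_mul_of_nonneg_left (le_max_left _ _) hq
      have r1 : (0:ℝ) ≤ p * max (S ω - a) 0 :=
        mul_nonneg hp (le_max_right _ _)
      have r2 : (0:ℝ) ≤ q * max (S ω - b) 0 :=
        mul_nonneg hq (le_max_right _ _)
      have hq1 : q = 1 - p := by linarith
      have heq : S ω - (p*a+q*b) = p*(S ω - a) + q*(S ω - b) := by rw [hq1]; ring
      apply max_le _ (by linarith)
      linarith [l1, l2]
    calc f (p*a+q*b) ≤ ∫ ω, (p * max (S ω - a) 0 + q * max (S ω - b) 0) :=
          integral_mono (hint _) (((hint a).const_mul p).add ((hint b).const_mul q)) ptw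
      _ = p * f a + q * f b := by
          rw [integral_add ((hint a).const_mul p) ((hint b).const_mul q),
            integral_const_mul, integral_const_mul]
  -- H facts
  have hH0 : H 0 = 0 := by simp [hH]
  have hHn : H n = 1 := by rw [hH]; exact hsum
  have hHstep : ∀ k < n, H (k+1) = H k + h (k+1) := by
    intro k hk
    rw [hH, hH, Finset.sum_Icc_succ_top (Nat.le_add_left 1 k)]
  have hstep_pos : ∀ k < n, H k < H (k+1) := by
    intro k hk
    rw [hHstep k hk]
    have := hpos (k+1) (Finset.mem_Icc.mpr ⟨Nat.le_add_left 1 k, by omega⟩)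
    linarith
  -- f values at H k
  have hfk : ∀ k ≤ n, f (H k) ≤ m k := by
    intro k hk
    rcases Nat.eq_zero_or_pos k with rfl | hk1
    · have e : f (H 0) = ∫ ω, S ω := by
        rw [hH0]
        have : (fun ω => max (S ω - 0) 0) = fun ω => S ω :=
          funext fun ω => by rw [sub_zero]; exact max_eq_left (hS0 ω)
        simp only [hf_def, this]
      exact le_of_eq (by rw [e, hSmean])
    · rcases eq_or_lt_of_le hk with rfl | hkn
      · have e : f (H k) = 0 := by
          rw [hHn]
          have : (fun ω => max (S ω - 1) 0) = fun _ => (0:ℝ) :=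
            funext fun ω => max_eq_right (by linarith [hS1 ω])
          simp only [hf_def, this, integral_zero]
        rw [e, hm_def]
        simp [Finset.Icc_eq_empty (by omega : ¬ k + 1 ≤ k)]
      · exact hSLT k (Finset.mem_Icc.mpr ⟨hk1, by omega⟩)
  -- Fubini: E[S^2] = 2 * ∫₀¹ f
  have swap : (∫ ω, (S ω)^2) = 2 * ∫ t in (0:ℝ)..1, f t := by
    have ptw : (fun ω => (S ω)^2) = fun ω => 2 * ∫ t in (0:ℝ)..1, max (S ω - t) 0 := by
      funext ω
      rw [aux_sq_integral_max (hS0 ω) (hS1 ω)]; ring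
    rw [ptw, integral_const_mul]
    congr 1
    have hrw : ∀ ω : Ω, (∫ t in (0:ℝ)..1, max (S ω - t) 0)
        = ∫ t in Set.Ioc (0:ℝ) 1, max (S ω - t) 0 := fun ω =>
      intervalIntegral.integral_of_le zero_le_one
    simp_rw [hrw]
    rw [intervalIntegral.integral_of_le zero_le_one]
    have hFmeas : Measurable (Function.uncurry fun (ω : Ω) (t : ℝ) => max (S ω - t) 0) :=
      ((hSmeas.comp measurable_fst).sub measurable_snd).max measurable_const
    have hnull : (Measure.prod volume (volume.restrict (Set.Ioc (0:ℝ) 1)))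
        {p : Ω × ℝ | ¬ p.2 ∈ Set.Ioc (0:ℝ) 1} = 0 := by
      have hset : {p : Ω × ℝ | ¬ p.2 ∈ Set.Ioc (0:ℝ) 1}
          = (Set.univ : Set Ω) ×ˢ (Set.Ioc (0:ℝ) 1)ᶜ := by
        ext p; simp
      rw [hset, Measure.prod_prod, Measure.restrict_apply (measurableSet_Ioc.compl)]
      simp
    have hae : ∀ᵐ (p : Ω × ℝ) ∂(Measure.prod volume (volume.restrict (Set.Ioc (0:ℝ) 1))),
        p.2 ∈ Set.Ioc (0:ℝ) 1 := ae_iff.mpr hnull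
    have hFint : Integrable (Function.uncurry fun (ω : Ω) (t : ℝ) => max (S ω - t) 0)
        (Measure.prod volume (volume.restrict (Set.Ioc (0:ℝ) 1))) := by
      apply (integrable_const (1:ℝ)).mono' hFmeas.aestronglyMeasurable
      filter_upwards [hae] with p hp
      rw [Real.norm_eq_abs, abs_of_nonneg (le_max_right _ _)]
      exact max_le (by linarith [hS1 p.1, hp.1]) zero_le_one
    exact integral_integral_swap hFint
  -- split [0,1] into the pieces [H k, H (k+1)]
  have hsplit01 : (∫ t in (0:ℝ)..1, f t)
      = ∑ k ∈ Finset.range n, ∫ t in (H k)..(H (k+1)), f t := by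
    have := intervalIntegral.sum_integral_adjacent_intervals
      (a := H) (μ := volume) (f := f) (n := n)
      (fun k _ => hf_anti.intervalIntegrable)
    rw [hH0, hHn] at this
    exact this.symm
  -- bound each piece by the chord
  have piece : ∀ k ∈ Finset.range n, (∫ t in (H k)..(H (k+1)), f t)
      ≤ (H (k+1) - H k) * (f (H k) + f (H (k+1))) / 2 := by
    intro k hk
    rw [Finset.mem_range] at hk
    have hab : H k < H (k+1) := hstep_pos k hk
    have hcont : Continuous fun t : ℝ =>
        ((H (k+1) - t) * f (H k) + (t - H k) * f (H (k+1))) / (H (k+1) - H k) :=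
      (((continuous_const.sub continuous_id).mul continuous_const).add
        ((continuous_id.sub continuous_const).mul continuous_const)).div_const _
    calc (∫ t in (H k)..(H (k+1)), f t)
        ≤ ∫ t in (H k)..(H (k+1)),
            ((H (k+1) - t) * f (H k) + (t - H k) * f (H (k+1))) / (H (k+1) - H k) :=
          intervalIntegral.integral_mono_on hab.le hf_anti.intervalIntegrable
            (hcont.intervalIntegrable _ _)
            (fun t ht => aux_chord_le hf_cvx hab ht.1 ht.2)
      _ = (H (k+1) - H k) * (f (H k) + f (H (k+1))) / 2 := aux_integral_chord _ _ _ _ hab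
  -- key bound
  have key : (∫ ω, (S ω)^2) ≤ ∑ k ∈ Finset.range n, h (k+1) * (m k + m (k+1)) := by
    rw [swap, hsplit01]
    calc 2 * ∑ k ∈ Finset.range n, ∫ t in (H k)..(H (k+1)), f t
        ≤ 2 * ∑ k ∈ Finset.range n, (H (k+1) - H k) * (f (H k) + f (H (k+1))) / 2 := by
          have := Finset.sum_le_sum piece
          linarith
      _ = ∑ k ∈ Finset.range n, (H (k+1) - H k) * (f (H k) + f (H (k+1))) := by
          rw [Finset.mul_sum]; exact Finset.sum_congr rfl fun k _ => by ring
      _ ≤ ∑ k ∈ Finset.range n, h (k+1) * (m k + m (k+1)) := by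
          apply Finset.sum_le_sum
          intro k hk
          rw [Finset.mem_range] at hk
          have hh : H (k+1) - H k = h (k+1) := by rw [hHstep k hk]; ring
          have hpos' := hpos (k+1) (Finset.mem_Icc.mpr ⟨Nat.le_add_left 1 k, by omega⟩)
          have b1 := hfk k (by omega)
          have b2 := hfk (k+1) (by omega)
          rw [hh]
          exact mul_le_mul_of_nonneg_left (add_le_add b1 b2) hpos'.le
  -- antitonicity of α on [1,n]
  have hαanti : ∀ i j : ℕ, 1 ≤ i → i ≤ j → j ≤ n → α j ≤ α i := by
    intro i j hi hij hjn
    induction j, hij using Nat.le_induction with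
    | base => exact le_rfl
    | succ j hij ih =>
      have hlt : α (j+1) < α j := hαdec j (Finset.mem_Icc.mpr ⟨by omega, by omega⟩)
      exact le_trans hlt.le (ih (by omega))
  -- inner sum decomposition
  have hsplitj : ∀ i ∈ Finset.Icc 1 n,
      (∑ j ∈ Finset.Icc 1 n, h i * h j * min (α i) (α j)) = h i * α i * H i + h i * m i := by
    intro i hi
    obtain ⟨hi1, hin⟩ := Finset.mem_Icc.mp hi
    have hdecomp : Finset.Icc 1 n = Finset.Icc 1 i ∪ Finset.Ioc i n := by
      ext j; simp only [Finset.mem_union, Finset.mem_Icc, Finset.mem_Ioc]; omega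
    have hdisj : Disjoint (Finset.Icc 1 i) (Finset.Ioc i n) := by
      rw [Finset.disjoint_left]
      intro j hj hj'
      rw [Finset.mem_Icc] at hj; rw [Finset.mem_Ioc] at hj'; omega
    rw [hdecomp, Finset.sum_union hdisj]
    congr 1
    · have e1 : ∀ j ∈ Finset.Icc 1 i, h i * h j * min (α i) (α j) = (h i * α i) * h j := by
        intro j hj
        obtain ⟨hj1, hji⟩ := Finset.mem_Icc.mp hj
        rw [min_eq_left (hαanti j i hj1 hji hin)]
        ring
      rw [Finset.sum_congr rfl e1, ← Finset.mul_sum, hH i]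
    · have e2 : ∀ j ∈ Finset.Ioc i n, h i * h j * min (α i) (α j) = h i * (h j * α j) := by
        intro j hj
        obtain ⟨hij, hjn⟩ := Finset.mem_Ioc.mp hj
        rw [min_eq_right (hαanti i j hi1 hij.le hjn)]
        ring
      rw [Finset.sum_congr rfl e2, ← Finset.mul_sum]
      congr 1
      simp only [hm_def]
      rw [← Finset.Icc_add_one_left_eq_Ioc]
  -- m step
  have hmstep : ∀ k, 1 ≤ k → k ≤ n → m (k-1) = h k * α k + m k := by
    intro k h1 h2
    have e0 : (k-1)+1 = k := by omega
    simp only [hm_def]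
    rw [e0, show Finset.Icc k n = insert k (Finset.Ioc k n) from (Finset.Ioc_insert_left h2).symm,
      Finset.sum_insert Finset.left_notMem_Ioc, ← Finset.Icc_add_one_left_eq_Ioc]
  -- H step
  have hHpred : ∀ k, 1 ≤ k → H k = H (k-1) + h k := by
    intro k h1
    obtain ⟨l, rfl⟩ : ∃ l, k = l+1 := ⟨k-1, by omega⟩
    simp only [Nat.add_sub_cancel]
    rw [hH, hH, Finset.sum_Icc_succ_top (by omega : 1 ≤ l+1)]
  -- swap double sum
  have hswap : (∑ k ∈ Finset.Icc 1 n, h k * m k)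
      = ∑ j ∈ Finset.Icc 1 n, h j * α j * H (j-1) := by
    have step1 : ∀ k : ℕ, h k * m k
        = ∑ j ∈ Finset.Icc 1 n, if k < j then h k * (h j * α j) else 0 := by
      intro k
      rw [← Finset.sum_filter]
      have e : Finset.filter (fun j => k < j) (Finset.Icc 1 n) = Finset.Icc (k+1) n := by
        ext j; simp only [Finset.mem_filter, Finset.mem_Icc]; omega
      rw [e, hm_def, Finset.mul_sum]
    calc (∑ k ∈ Finset.Icc 1 n, h k * m k)
        = ∑ k ∈ Finset.Icc 1 n, ∑ j ∈ Finset.Icc 1 n,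
            if k < j then h k * (h j * α j) else 0 :=
          Finset.sum_congr rfl fun k _ => step1 k
      _ = ∑ j ∈ Finset.Icc 1 n, ∑ k ∈ Finset.Icc 1 n,
            if k < j then h k * (h j * α j) else 0 := Finset.sum_comm
      _ = ∑ j ∈ Finset.Icc 1 n, h j * α j * H (j-1) := by
          apply Finset.sum_congr rfl
          intro j hj
          obtain ⟨hj1, hjn⟩ := Finset.mem_Icc.mp hj
          rw [← Finset.sum_filter]
          have e : Finset.filter (fun k => k < j) (Finset.Icc 1 n) = Finset.Icc 1 (j-1) := by
            ext k; simp only [Finset.mem_filter, Finset.mem_Icc]; omega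
          rw [e, hH (j-1), Finset.mul_sum]
          exact Finset.sum_congr rfl fun k _ => by ring
  -- algebra identity
  have alg : (∑ k ∈ Finset.range n, h (k+1) * (m k + m (k+1)))
      = ∑ i ∈ Finset.Icc 1 n, ∑ j ∈ Finset.Icc 1 n, h i * h j * min (α i) (α j) := by
    have lhs1 : (∑ k ∈ Finset.Icc 1 n, h k * (m (k-1) + m k))
        = ∑ k ∈ Finset.range n, h (k+1) * (m k + m (k+1)) := by
      rw [show Finset.Icc 1 n = Finset.Ico 1 (n+1) from by rw [Finset.Ico_add_one_right_eq_Icc],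
        Finset.sum_Ico_eq_sum_range]
      simp only [Nat.add_sub_cancel]
      apply Finset.sum_congr rfl
      intro i _
      rw [show 1+i = i+1 from Nat.add_comm 1 i, Nat.add_sub_cancel]
    rw [← lhs1, Finset.sum_congr rfl hsplitj]
    have lhs2 : (∑ k ∈ Finset.Icc 1 n, h k * (m (k-1) + m k))
        = ∑ k ∈ Finset.Icc 1 n, (h k * (h k * α k) + h k * m k + h k * m k) := by
      apply Finset.sum_congr rfl
      intro k hk
      obtain ⟨h1, h2⟩ := Finset.mem_Icc.mp hk
      rw [hmstep k h1 h2]; ring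
    have rhs2 : ∀ i ∈ Finset.Icc 1 n, h i * α i * H i + h i * m i
        = h i * (h i * α i) + h i * α i * H (i-1) + h i * m i := by
      intro i hi
      obtain ⟨h1, _⟩ := Finset.mem_Icc.mp hi
      rw [hHpred i h1]; ring
    rw [lhs2, Finset.sum_congr rfl rhs2]
    simp only [Finset.sum_add_distrib]
    have hswap2 : (∑ j ∈ Finset.Icc 1 n, h j * α j * H (j-1))
        = ∑ k ∈ Finset.Icc 1 n, h k * m k := hswap.symm
    rw [← hswap2]
  -- conclude
  have hmem : MemLp S 2 volume :=
    MemLp.of_bound hSmeas.aestronglyMeasurable 1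
      (ae_of_all _ fun ω => by rw [Real.norm_eq_abs, abs_of_nonneg (hS0 ω)]; exact hS1 ω)
  rw [variance_eq_sub hmem]
  have h2 : (∫ x, (S ^ 2) x) = ∫ ω, (S ω)^2 := rfl
  have hfinal : (∑ i ∈ Finset.Icc 1 n, ∑ j ∈ Finset.Icc 1 n,
        h i * h j * (min (α i) (α j) - α i * α j))
      = (∑ i ∈ Finset.Icc 1 n, ∑ j ∈ Finset.Icc 1 n, h i * h j * min (α i) (α j))
        - (∑ k ∈ Finset.Icc 1 n, h k * α k)^2 := by
    rw [pow_two, Finset.sum_mul_sum, ← Finset.sum_sub_distrib]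
    apply Finset.sum_congr rfl
    intro i _
    rw [← Finset.sum_sub_distrib]
    apply Finset.sum_congr rfl
    intro j _
    ring
  rw [h2, hfinal, hSmean]
  have key2 : (∫ ω, (S ω)^2)
      ≤ ∑ i ∈ Finset.Icc 1 n, ∑ j ∈ Finset.Icc 1 n, h i * h j * min (α i) (α j) := by
    rw [← alg]; exact key
  linarith
end

section
/- Let S be a [0,1]-valued random variable with π_S(H_k) ≤ Σ_{i>k} h_i α_i for k = 0,1,…,n−1 (where H₀ = 0, so in particular E[S] ≤ Σ_i h_i α_i). Then there exists β ∈ [0, α₁] such that, setting a_k = min(β, α_k), one has Σ_k h_k a_k = E[S] and π_S(H_k) ≤ Σ_{i>k} h_i a_i for all k = 1,…,n−1; consequently S can be written as S = Σ_k h_k X_k with X_k ∈ [0,1] and E[X_k] = a_k ≤ α_k. -/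
open MeasureTheory Set Finset

/-- Partial sums `∑_{i=1}^k w i`. -/
def Hpart (w : ℕ → ℝ) (k : ℕ) : ℝ := ∑ i ∈ Finset.Icc 1 k, w i

lemma Hpart_zero (w : ℕ → ℝ) : Hpart w 0 = 0 := by simp [Hpart]

lemma Hpart_succ (w : ℕ → ℝ) (k : ℕ) : Hpart w (k+1) = Hpart w k + w (k+1) := by
  simp [Hpart, Finset.sum_Icc_succ_top (Nat.le_add_left 1 k)]

lemma Hpart_mono {w : ℕ → ℝ} {m : ℕ} (hw : ∀ i ∈ Finset.Icc 1 m, 0 ≤ w i)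
    {j k : ℕ} (hjk : j ≤ k) (hk : k ≤ m) : Hpart w j ≤ Hpart w k := by
  unfold Hpart
  have : Finset.Icc 1 j ⊆ Finset.Icc 1 k := Finset.Icc_subset_Icc le_rfl hjk
  refine Finset.sum_le_sum_of_subset_of_nonneg this ?_
  intro i hi _
  exact hw i (Finset.mem_Icc.mpr ⟨(Finset.mem_Icc.mp hi).1, le_trans (Finset.mem_Icc.mp hi).2 hk⟩)

lemma Hpart_nonneg {w : ℕ → ℝ} {m : ℕ} (hw : ∀ i ∈ Finset.Icc 1 m, 0 ≤ w i)
    {k : ℕ} (hk : k ≤ m) : 0 ≤ Hpart w k := by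
  have := Hpart_mono hw (Nat.zero_le k) hk
  rwa [Hpart_zero] at this

/-- The blocklayer function: length of block `i` above level `c`. -/
noncomputable def blk (w : ℕ → ℝ) (i : ℕ) (c : ℝ) : ℝ :=
  max (Hpart w i - c) 0 - max (Hpart w (i-1) - c) 0

/-- Piecewise-linear upper envelope. -/
noncomputable def eta (m : ℕ) (w a : ℕ → ℝ) (c : ℝ) : ℝ :=
  ∑ i ∈ Finset.Icc 1 m, a i * blk w i c

lemma blk_nonneg {w : ℕ → ℝ} {m i : ℕ} (hw : ∀ i ∈ Finset.Icc 1 m, 0 ≤ w i)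
    (hi : i ∈ Finset.Icc 1 m) (c : ℝ) : 0 ≤ blk w i c := by
  have h1 : Hpart w (i-1) ≤ Hpart w i :=
    Hpart_mono hw (Nat.sub_le i 1) (Finset.mem_Icc.mp hi).2
  have : max (Hpart w (i-1) - c) 0 ≤ max (Hpart w i - c) 0 :=
    max_le_max (by linarith) le_rfl
  simp only [blk]; linarith

lemma blk_le {w : ℕ → ℝ} {m i : ℕ} (hw : ∀ i ∈ Finset.Icc 1 m, 0 ≤ w i)
    (hi : i ∈ Finset.Icc 1 m) (c : ℝ) : blk w i c ≤ w i := by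
  have hi1 : 1 ≤ i := (Finset.mem_Icc.mp hi).1
  have h1 : Hpart w i = Hpart w (i-1) + w i := by
    obtain ⟨j, rfl⟩ : ∃ j, i = j + 1 := ⟨i - 1, (Nat.succ_pred_eq_of_pos hi1).symm⟩
    simp [Hpart_succ]
  rcases le_total (Hpart w i - c) 0 with hc | hc
  · have : blk w i c ≤ 0 := by
      simp only [blk]
      have : (0:ℝ) ≤ max (Hpart w (i-1) - c) 0 := le_max_right _ _
      rw [max_eq_right hc]; linarith
    have := hw i hi; linarith
  · simp only [blk, max_eq_left hc]
    have : Hpart w (i-1) - c ≤ max (Hpart w (i-1) - c) 0 := le_max_left _ _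
    linarith

/-- Telescoping: `∑_{i=1}^k blk w i c = max (Hpart w k - c) 0 - max (-c) 0`. -/
lemma blk_sum (w : ℕ → ℝ) (k : ℕ) (c : ℝ) :
    ∑ i ∈ Finset.Icc 1 k, blk w i c = max (Hpart w k - c) 0 - max (0 - c) 0 := by
  induction k with
  | zero => simp [Hpart_zero]
  | succ k ih =>
      rw [Finset.sum_Icc_succ_top (Nat.le_add_left 1 k), ih]
      simp only [blk, Nat.add_sub_cancel]
      ring

lemma blk_sum' (w : ℕ → ℝ) (k : ℕ) {c : ℝ} (hc : 0 ≤ c) :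
    ∑ i ∈ Finset.Icc 1 k, blk w i c = max (Hpart w k - c) 0 := by
  rw [blk_sum]
  have : max (0 - c) 0 = 0 := max_eq_right (by linarith)
  rw [this, sub_zero]

lemma blk_at_zero {w : ℕ → ℝ} {m i : ℕ} (hw : ∀ i ∈ Finset.Icc 1 m, 0 ≤ w i)
    (hi : i ∈ Finset.Icc 1 m) : blk w i 0 = w i := by
  have hi1 : 1 ≤ i := (Finset.mem_Icc.mp hi).1
  have h1 : Hpart w i = Hpart w (i-1) + w i := by
    obtain ⟨j, rfl⟩ : ∃ j, i = j + 1 := ⟨i - 1, (Nat.succ_pred_eq_of_pos hi1).symm⟩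
    simp [Hpart_succ]
  have h2 : 0 ≤ Hpart w (i-1) := Hpart_nonneg hw (le_trans (Nat.sub_le i 1) (Finset.mem_Icc.mp hi).2)
  have h3 : 0 ≤ Hpart w i := Hpart_nonneg hw (Finset.mem_Icc.mp hi).2
  simp only [blk, sub_zero, max_eq_left h3, max_eq_left h2]
  linarith

/-- `blk` is nonincreasing in `c`. -/
lemma blk_anti {w : ℕ → ℝ} {m i : ℕ} (hw : ∀ i ∈ Finset.Icc 1 m, 0 ≤ w i)
    (hi : i ∈ Finset.Icc 1 m) {c d : ℝ} (hcd : c ≤ d) : blk w i d ≤ blk w i c := by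
  have h1 : Hpart w (i-1) ≤ Hpart w i :=
    Hpart_mono hw (Nat.sub_le i 1) (Finset.mem_Icc.mp hi).2
  set A := Hpart w (i-1); set B := Hpart w i
  simp only [blk]
  rcases le_total (B - d) 0 with h2 | h2 <;> rcases le_total (A - d) 0 with h3 | h3 <;>
    rcases le_total (B - c) 0 with h4 | h4 <;> rcases le_total (A - c) 0 with h5 | h5 <;>
    simp +zetaDelta only [max_eq_right, max_eq_left, h2, h3, h4, h5] <;> linarith
lemma blk_zero_of_ge {w : ℕ → ℝ} {m i : ℕ} (hw : ∀ i ∈ Finset.Icc 1 m, 0 ≤ w i)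
    (hi : i ∈ Finset.Icc 1 m) {c : ℝ} (hc : Hpart w i ≤ c) : blk w i c = 0 := by
  have h1 : Hpart w (i-1) ≤ Hpart w i :=
    Hpart_mono hw (Nat.sub_le i 1) (Finset.mem_Icc.mp hi).2
  simp only [blk, max_eq_right (by linarith : Hpart w i - c ≤ 0),
    max_eq_right (by linarith : Hpart w (i-1) - c ≤ 0), sub_zero]

lemma blk_full {w : ℕ → ℝ} {i : ℕ} (hi : 1 ≤ i) (hwi : 0 ≤ w i) {c : ℝ} (hc : c ≤ Hpart w (i-1)) :
    blk w i c = w i := by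
  have h1 : Hpart w i = Hpart w (i-1) + w i := by
    obtain ⟨j, rfl⟩ : ∃ j, i = j + 1 := ⟨i - 1, (Nat.succ_pred_eq_of_pos hi).symm⟩
    simp [Hpart_succ]
  simp only [blk, max_eq_left (by linarith : (0:ℝ) ≤ Hpart w i - c),
    max_eq_left (by linarith : (0:ℝ) ≤ Hpart w (i-1) - c)]
  linarith

lemma Icc_split (k m : ℕ) (hk : k ≤ m) (f : ℕ → ℝ) :
    ∑ i ∈ Finset.Icc 1 m, f i = (∑ i ∈ Finset.Icc 1 k, f i) + ∑ i ∈ Finset.Icc (k+1) m, f i := by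
  have e : ∀ a b : ℕ, Finset.Icc (a+1) b = Finset.Ioc a b := by
    intro a b; ext x; simp only [Finset.mem_Icc, Finset.mem_Ioc]; omega
  rw [show (1:ℕ) = 0 + 1 from rfl, e 0 k, e 0 m, e k m]
  exact (Finset.sum_Ioc_consecutive f (Nat.zero_le k) hk).symm

/-- `eta` on the block `[H_k, H_{k+1}]`. -/
lemma eta_block {w a : ℕ → ℝ} {m k : ℕ} (hw : ∀ i ∈ Finset.Icc 1 m, 0 ≤ w i)
    (hk : k + 1 ≤ m) {c : ℝ} (hc1 : Hpart w k ≤ c) (hc2 : c ≤ Hpart w (k+1)) :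
    eta m w a c = a (k+1) * (Hpart w (k+1) - c) + ∑ i ∈ Finset.Icc (k+2) m, a i * w i := by
  unfold eta
  rw [Icc_split (k+1) m hk (fun i => a i * blk w i c), Icc_split k (k+1) (Nat.le_succ k)
    (fun i => a i * blk w i c)]
  have t1 : ∑ i ∈ Finset.Icc 1 k, a i * blk w i c = 0 := by
    apply Finset.sum_eq_zero
    intro i hi
    have : blk w i c = 0 := by
      refine blk_zero_of_ge hw (Finset.mem_Icc.mpr ⟨(Finset.mem_Icc.mp hi).1,
        le_trans (Finset.mem_Icc.mp hi).2 (le_trans (Nat.le_succ k) hk)⟩) ?_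
      exact le_trans (Hpart_mono hw (Finset.mem_Icc.mp hi).2 (le_trans (Nat.le_succ k) hk)) hc1
    simp [this]
  have t2 : ∑ i ∈ Finset.Icc (k+1) (k+1), a i * blk w i c = a (k+1) * (Hpart w (k+1) - c) := by
    rw [Finset.Icc_self, Finset.sum_singleton]
    have : blk w (k+1) c = Hpart w (k+1) - c := by
      simp only [blk, Nat.add_sub_cancel,
        max_eq_left (by linarith : (0:ℝ) ≤ Hpart w (k+1) - c),
        max_eq_right (by linarith : Hpart w k - c ≤ 0)]
      linarith
    rw [this]
  have t3 : ∑ i ∈ Finset.Icc (k+2) m, a i * blk w i c = ∑ i ∈ Finset.Icc (k+2) m, a i * w i := by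
    apply Finset.sum_congr rfl
    intro i hi
    obtain ⟨hi1, hi2⟩ := Finset.mem_Icc.mp hi
    have hi' : i ∈ Finset.Icc 1 m := Finset.mem_Icc.mpr (by omega)
    have : blk w i c = w i := by
      refine blk_full (by omega) (hw i hi') (le_trans hc2 ?_)
      exact Hpart_mono hw (by omega) (by omega)
    rw [this]
  rw [t1, t2, t3]; ring

lemma eta_at_zero {w a : ℕ → ℝ} {m : ℕ} (hw : ∀ i ∈ Finset.Icc 1 m, 0 ≤ w i) :
    eta m w a 0 = ∑ i ∈ Finset.Icc 1 m, a i * w i := by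
  unfold eta
  exact Finset.sum_congr rfl fun i hi => by rw [blk_at_zero hw hi]

lemma eta_knot {w a : ℕ → ℝ} {m k : ℕ} (hw : ∀ i ∈ Finset.Icc 1 m, 0 ≤ w i) (hk : k ≤ m) :
    eta m w a (Hpart w k) = ∑ i ∈ Finset.Icc (k+1) m, a i * w i := by
  unfold eta
  rw [Icc_split k m hk (fun i => a i * blk w i (Hpart w k))]
  have t1 : ∑ i ∈ Finset.Icc 1 k, a i * blk w i (Hpart w k) = 0 := by
    apply Finset.sum_eq_zero
    intro i hi
    obtain ⟨hi1, hi2⟩ := Finset.mem_Icc.mp hi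
    have : blk w i (Hpart w k) = 0 :=
      blk_zero_of_ge hw (Finset.mem_Icc.mpr ⟨hi1, le_trans hi2 hk⟩) (Hpart_mono hw hi2 hk)
    simp [this]
  have t3 : ∑ i ∈ Finset.Icc (k+1) m, a i * blk w i (Hpart w k)
      = ∑ i ∈ Finset.Icc (k+1) m, a i * w i := by
    apply Finset.sum_congr rfl
    intro i hi
    obtain ⟨hi1, hi2⟩ := Finset.mem_Icc.mp hi
    rw [blk_full (by omega) (hw i (Finset.mem_Icc.mpr (by omega))) (Hpart_mono hw (by omega) (by omega))]
  rw [t1, t3, zero_add]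

lemma eta_nonneg {w a : ℕ → ℝ} {m : ℕ} (hw : ∀ i ∈ Finset.Icc 1 m, 0 ≤ w i)
    (ha : ∀ i ∈ Finset.Icc 1 m, 0 ≤ a i) (c : ℝ) : 0 ≤ eta m w a c :=
  Finset.sum_nonneg fun i hi => mul_nonneg (ha i hi) (blk_nonneg hw hi c)

lemma eta_le_max {w a : ℕ → ℝ} {m : ℕ} {A : ℝ} (hA : 0 ≤ A)
    (hw : ∀ i ∈ Finset.Icc 1 m, 0 ≤ w i)
    (ha : ∀ i ∈ Finset.Icc 1 m, 0 ≤ a i ∧ a i ≤ A) {c : ℝ} (hc : 0 ≤ c) :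
    eta m w a c ≤ A * max (Hpart w m - c) 0 := by
  calc eta m w a c ≤ ∑ i ∈ Finset.Icc 1 m, A * blk w i c := by
        apply Finset.sum_le_sum
        intro i hi
        exact mul_le_mul_of_nonneg_right (ha i hi).2 (blk_nonneg hw hi c)
    _ = A * max (Hpart w m - c) 0 := by rw [← Finset.mul_sum, blk_sum' w m hc]

lemma eta_lip {w a : ℕ → ℝ} {m : ℕ} {A : ℝ} (hA : 0 ≤ A)
    (hw : ∀ i ∈ Finset.Icc 1 m, 0 ≤ w i)
    (ha : ∀ i ∈ Finset.Icc 1 m, 0 ≤ a i ∧ a i ≤ A) {c d : ℝ} (hc : 0 ≤ c) (hd : 0 ≤ d) :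
    eta m w a c - eta m w a (c + d) ≤ A * d := by
  have key : eta m w a c - eta m w a (c + d)
      = ∑ i ∈ Finset.Icc 1 m, a i * (blk w i c - blk w i (c+d)) := by
    unfold eta
    rw [← Finset.sum_sub_distrib]
    exact Finset.sum_congr rfl fun i hi => by ring
  rw [key]
  calc ∑ i ∈ Finset.Icc 1 m, a i * (blk w i c - blk w i (c+d))
      ≤ ∑ i ∈ Finset.Icc 1 m, A * (blk w i c - blk w i (c+d)) := by
        apply Finset.sum_le_sum
        intro i hi
        exact mul_le_mul_of_nonneg_right (ha i hi).2
          (by have := blk_anti hw hi (by linarith : c ≤ c + d); linarith)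
    _ = A * (max (Hpart w m - c) 0 - max (Hpart w m - (c+d)) 0) := by
        rw [← Finset.mul_sum, Finset.sum_sub_distrib, blk_sum' w m hc, blk_sum' w m (by linarith)]
    _ ≤ A * d := by
        apply mul_le_mul_of_nonneg_left _ hA
        rcases le_total (Hpart w m - c) 0 with h1 | h1
        · rw [max_eq_right h1]
          have : (0:ℝ) ≤ max (Hpart w m - (c+d)) 0 := le_max_right _ _
          linarith
        · rw [max_eq_left h1]
          have : Hpart w m - (c+d) ≤ max (Hpart w m - (c+d)) 0 := le_max_left _ _
          linarith

lemma Hpart_shift (w : ℕ → ℝ) (i : ℕ) :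
    Hpart (fun j => w (j+1)) i = Hpart w (i+1) - w 1 := by
  induction i with
  | zero => simp [Hpart_zero, Hpart, Finset.Icc_self]
  | succ i ih => simp only [Hpart_succ, ih]; ring

lemma eta_succ (w a : ℕ → ℝ) (m : ℕ) (c : ℝ) :
    eta (m+1) w a c = eta m w a c + a (m+1) * blk w (m+1) c := by
  unfold eta
  rw [Finset.sum_Icc_succ_top (Nat.le_add_left 1 m)]

lemma eta_shift {w a : ℕ → ℝ} {m : ℕ} (hw1 : 0 ≤ w 1) {c : ℝ} (hc : 0 ≤ c) :
    eta m (fun j => w (j+1)) (fun j => a (j+1)) c = eta (m+1) w a (c + w 1) := by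
  have hblk : ∀ i : ℕ, blk (fun j => w (j+1)) (i+1) c = blk w (i+2) (c + w 1) := by
    intro i
    simp only [blk, Hpart_shift, Nat.add_sub_cancel]
    have e : ∀ x : ℝ, x - w 1 - c = x - (c + w 1) := fun x => by ring
    rw [show i+1+1 = i+2 from rfl, show (i+2-1) = i+1 from by omega, e, e]
  have hfirst : blk w 1 (c + w 1) = 0 := by
    have h1 : Hpart w 1 = w 1 := by rw [show (1:ℕ) = 0 + 1 from rfl, Hpart_succ, Hpart_zero]; ring
    simp only [blk, Nat.sub_self, Hpart_zero, h1]
    rw [max_eq_right (by linarith), max_eq_right (by linarith), sub_zero]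
  induction m with
  | zero =>
      have : eta 0 (fun j => w (j+1)) (fun j => a (j+1)) c = 0 := by simp [eta]
      rw [this, show (0:ℕ)+1 = 0+1 from rfl, eta_succ]
      have : eta 0 w a (c + w 1) = 0 := by simp [eta]
      rw [this, hfirst]; ring
  | succ m ih =>
      rw [eta_succ, ih, eta_succ w a (m+1)]
      rw [show (m+1+1) = m+2 from rfl, hblk m]
/-! Pointwise window lemmas. -/

lemma win_nonneg {t x d : ℝ} (hd : 0 ≤ d) :
    0 ≤ max (t - x) 0 - max (t - (x + d)) 0 := by
  simp only [max_def]; split_ifs <;> linarith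

lemma win_le {t x d : ℝ} (hd : 0 ≤ d) :
    max (t - x) 0 - max (t - (x + d)) 0 ≤ d := by
  simp only [max_def]; split_ifs <;> linarith

lemma tprime_mem {t x d L : ℝ} (hd : 0 ≤ d) (ht0 : 0 ≤ t) (htL : t ≤ L)
    (hx : 0 ≤ x) (hxd : x + d ≤ L) :
    t - (max (t - x) 0 - max (t - (x + d)) 0) ∈ Set.Icc 0 (L - d) := by
  constructor <;> (simp only [max_def]; split_ifs <;> linarith)

/-- For `c ≤ x`: `((t - W) - c)₊ = (t - c)₊ - W`. -/
lemma win_id_below {t x d c : ℝ} (hd : 0 ≤ d) (hc : c ≤ x) :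
    max (t - (max (t - x) 0 - max (t - (x + d)) 0) - c) 0
      = max (t - c) 0 - (max (t - x) 0 - max (t - (x + d)) 0) := by
  simp only [max_def]; split_ifs <;> linarith

/-- For `x ≤ c`: `((t - W) - c)₊ = (t - (c + d))₊`. -/
lemma win_id_above {t x d c : ℝ} (hd : 0 ≤ d) (hc : x ≤ c) :
    max (t - (max (t - x) 0 - max (t - (x + d)) 0) - c) 0 = max (t - (c + d)) 0 := by
  simp only [max_def]; split_ifs <;> linarith
section Prob

variable {Ω : Type*} [MeasureSpace Ω] [IsProbabilityMeasure (volume : Measure Ω)]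

lemma integrable_of_bdd {f : Ω → ℝ} (hf : Measurable f) {C : ℝ} (hC : ∀ ω, |f ω| ≤ C) :
    Integrable f :=
  (integrable_const C).mono' hf.aestronglyMeasurable
    (Filter.Eventually.of_forall (by simpa using hC))

variable {T : Ω → ℝ} {L : ℝ}

lemma meas_pos_part (hT : Measurable T) (c : ℝ) :
    Measurable fun ω => max (T ω - c) 0 :=
  (hT.sub measurable_const).max measurable_const

lemma integrable_pos_part (hT : Measurable T) (hb : ∀ ω, T ω ∈ Set.Icc 0 L) (c : ℝ) :
    Integrable fun ω => max (T ω - c) 0 := by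
  refine integrable_of_bdd (meas_pos_part hT c) (C := |L| + |c|) fun ω => ?_
  have h1 := (hb ω).1; have h2 := (hb ω).2
  have := le_abs_self L; have := neg_abs_le c; have := le_abs_self c
  rw [abs_le]; constructor <;> (simp only [max_def]; split_ifs <;> linarith)

lemma integrable_T (hT : Measurable T) (hb : ∀ ω, T ω ∈ Set.Icc 0 L) : Integrable T := by
  refine integrable_of_bdd hT (C := |L|) fun ω => ?_
  have h1 := (hb ω).1; have h2 := (hb ω).2; have := le_abs_self L
  rw [abs_le]; constructor <;> linarith

lemma piv_nonneg (c : ℝ) : 0 ≤ ∫ ω, max (T ω - c) 0 :=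
  integral_nonneg fun ω => le_max_right _ _

lemma piv_zero (hb : ∀ ω, T ω ∈ Set.Icc 0 L) {c : ℝ} (hc : L ≤ c) :
    (∫ ω, max (T ω - c) 0) = 0 := by
  have : (fun ω => max (T ω - c) 0) = fun _ => (0:ℝ) := by
    funext ω
    exact max_eq_right (by have := (hb ω).2; linarith)
  rw [this, integral_zero]

lemma piv_at_zero (hb : ∀ ω, T ω ∈ Set.Icc 0 L) :
    (∫ ω, max (T ω - 0) 0) = ∫ ω, T ω := by
  congr 1; funext ω
  rw [sub_zero, max_eq_left (hb ω).1]

lemma piv_anti (hT : Measurable T) (hb : ∀ ω, T ω ∈ Set.Icc 0 L) {c d : ℝ} (hcd : c ≤ d) :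
    (∫ ω, max (T ω - d) 0) ≤ ∫ ω, max (T ω - c) 0 :=
  integral_mono (integrable_pos_part hT hb d) (integrable_pos_part hT hb c)
    (fun ω => max_le_max (by linarith) le_rfl)

lemma piv_lip (hT : Measurable T) (hb : ∀ ω, T ω ∈ Set.Icc 0 L) (c d : ℝ) :
    |(∫ ω, max (T ω - c) 0) - ∫ ω, max (T ω - d) 0| ≤ |c - d| := by
  rw [← integral_sub (integrable_pos_part hT hb c) (integrable_pos_part hT hb d)]
  have key : ∀ᵐ ω ∂(volume : Measure Ω),
      ‖max (T ω - c) 0 - max (T ω - d) 0‖ ≤ |c - d| := by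
    refine Filter.Eventually.of_forall fun ω => ?_
    rw [Real.norm_eq_abs, abs_le]
    have := le_abs_self (c - d); have := neg_abs_le (c - d)
    constructor <;> (simp only [max_def]; split_ifs <;> linarith)
  have := norm_integral_le_of_norm_le_const (μ := (volume : Measure Ω)) key
  simpa using this

lemma piv_continuous (hT : Measurable T) (hb : ∀ ω, T ω ∈ Set.Icc 0 L) :
    Continuous fun c => ∫ ω, max (T ω - c) 0 := by
  refine (LipschitzWith.of_dist_le_mul fun c d => ?_).continuous (K := 1)
  rw [Real.dist_eq, Real.dist_eq, NNReal.coe_one, one_mul]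
  exact piv_lip hT hb c d

lemma piv_convex (hT : Measurable T) (hb : ∀ ω, T ω ∈ Set.Icc 0 L)
    {l u c₁ c₂ : ℝ} (hl : 0 ≤ l) (hu : 0 ≤ u) (hlu : l + u = 1) :
    (∫ ω, max (T ω - (l * c₁ + u * c₂)) 0)
      ≤ l * (∫ ω, max (T ω - c₁) 0) + u * ∫ ω, max (T ω - c₂) 0 := by
  have hint : Integrable fun ω => l * max (T ω - c₁) 0 + u * max (T ω - c₂) 0 :=
    ((integrable_pos_part hT hb c₁).const_mul l).add
      ((integrable_pos_part hT hb c₂).const_mul u)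
  have step : (∫ ω, max (T ω - (l * c₁ + u * c₂)) 0)
      ≤ ∫ ω, (l * max (T ω - c₁) 0 + u * max (T ω - c₂) 0) := by
    refine integral_mono (integrable_pos_part hT hb _) hint fun ω => ?_
    have h1 : T ω - (l * c₁ + u * c₂) = l * (T ω - c₁) + u * (T ω - c₂) := by
      have : l * T ω + u * T ω = T ω := by rw [← add_mul, hlu, one_mul]
      ring_nf
      nlinarith [this]
    refine max_le ?_ ?_
    · rw [h1]
      have := mul_le_mul_of_nonneg_left (le_max_left (T ω - c₁) 0) hl
      have := mul_le_mul_of_nonneg_left (le_max_left (T ω - c₂) 0) hu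
      linarith
    · have := mul_nonneg hl (le_max_right (T ω - c₁) 0)
      have := mul_nonneg hu (le_max_right (T ω - c₂) 0)
      linarith
  rwa [integral_add ((integrable_pos_part hT hb c₁).const_mul l)
    ((integrable_pos_part hT hb c₂).const_mul u),
    integral_const_mul, integral_const_mul] at step

end Prob
lemma sum_shift (f : ℕ → ℝ) (m : ℕ) :
    ∑ i ∈ Finset.Icc 2 (m+1), f i = ∑ i ∈ Finset.Icc 1 m, f (i+1) := by
  induction m with
  | zero => simp
  | succ m ih =>
      rw [Finset.sum_Icc_succ_top (by omega : 2 ≤ m+1+1), ih,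
        Finset.sum_Icc_succ_top (by omega : 1 ≤ m+1)]

lemma Hpart_one (w : ℕ → ℝ) : Hpart w 1 = w 1 := by
  rw [show (1:ℕ) = 0 + 1 from rfl, Hpart_succ, Hpart_zero, zero_add]

section Main

variable {Ω : Type*} [MeasureSpace Ω] [IsProbabilityMeasure (volume : Measure Ω)]

theorem decomp_aux : ∀ (m : ℕ) (T : Ω → ℝ) (w a : ℕ → ℝ),
    Measurable T →
    (∀ i ∈ Finset.Icc 1 m, 0 < w i) →
    (∀ i ∈ Finset.Icc 1 m, 0 ≤ a i) →
    (∀ i j : ℕ, i ∈ Finset.Icc 1 m → j ∈ Finset.Icc 1 m → i ≤ j → a j ≤ a i) →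
    (∀ ω, T ω ∈ Set.Icc 0 (Hpart w m)) →
    ((∫ ω, T ω) = ∑ i ∈ Finset.Icc 1 m, w i * a i) →
    (∀ c : ℝ, 0 ≤ c → (∫ ω, max (T ω - c) 0) ≤ eta m w a c) →
    ∃ X : ℕ → Ω → ℝ,
      (∀ k ∈ Finset.Icc 1 m, Measurable (X k) ∧ (∀ ω, X k ω ∈ Set.Icc (0:ℝ) 1) ∧
        (∫ ω, X k ω) = a k) ∧
      (∀ ω, T ω = ∑ k ∈ Finset.Icc 1 m, w k * X k ω) := by
  intro m
  induction m with
  | zero =>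
      intro T w a hT hw ha hmono hb hmean hinv
      refine ⟨fun _ _ => 0, by simp, fun ω => ?_⟩
      have h0 := hb ω
      rw [Hpart_zero] at h0
      have h1 := h0.1; have h2 := h0.2
      simp only [show Finset.Icc 1 0 = (∅ : Finset ℕ) from by simp, Finset.sum_empty]
      linarith
  | succ m ih =>
      intro T w a hT hw ha hmono hb hmean hinv
      have h1mem : (1:ℕ) ∈ Finset.Icc 1 (m+1) := Finset.mem_Icc.mpr (by omega)
      have hw1 : 0 < w 1 := hw 1 h1mem
      have ha1 : 0 ≤ a 1 := ha 1 h1mem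
      have hwn : ∀ i ∈ Finset.Icc 1 (m+1), 0 ≤ w i := fun i hi => (hw i hi).le
      have haA : ∀ i ∈ Finset.Icc 1 (m+1), 0 ≤ a i ∧ a i ≤ a 1 := fun i hi =>
        ⟨ha i hi, hmono 1 i h1mem hi (Finset.mem_Icc.mp hi).1⟩
      set L := Hpart w (m+1) with hL
      have hLw1 : w 1 ≤ L := by
        have := Hpart_mono hwn (show (1:ℕ) ≤ m+1 by omega) le_rfl
        rwa [Hpart_one] at this
      -- the sliding-window mean function
      set P : ℝ → ℝ := fun c => ∫ ω, max (T ω - c) 0 with hP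
      have hPc : Continuous P := piv_continuous hT hb
      have hgc : Continuous fun x => P x - P (x + w 1) :=
        hPc.sub (hPc.comp (continuous_add_right (w 1)))
      have hsplit : ∑ i ∈ Finset.Icc 1 (m+1), w i * a i
          = w 1 * a 1 + ∑ i ∈ Finset.Icc 2 (m+1), w i * a i := by
        rw [Icc_split 1 (m+1) (by omega) (fun i => w i * a i), Finset.Icc_self,
          Finset.sum_singleton]
      have hg0 : w 1 * a 1 ≤ P 0 - P (0 + w 1) := by
        have e0 : P 0 = ∑ i ∈ Finset.Icc 1 (m+1), w i * a i := by
          rw [hP]; simp only []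
          rw [piv_at_zero hb, hmean]
        have e1 : P (0 + w 1) ≤ ∑ i ∈ Finset.Icc 2 (m+1), w i * a i := by
          have h2 := hinv (0 + w 1) (by linarith)
          have heq : eta (m+1) w a (0 + w 1) = ∑ i ∈ Finset.Icc 2 (m+1), w i * a i := by
            rw [show (0:ℝ) + w 1 = Hpart w 1 from by rw [Hpart_one]; ring,
              eta_knot hwn (by omega : 1 ≤ m+1), show (1:ℕ)+1 = 2 from rfl]
            exact Finset.sum_congr rfl fun i _ => mul_comm _ _
          exact le_trans h2 heq.le
        rw [e0]; rw [hsplit]; linarith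
      have hgL : P (L - w 1) - P (L - w 1 + w 1) ≤ w 1 * a 1 := by
        have e1 : P (L - w 1 + w 1) = 0 := piv_zero hb (by linarith)
        have e2 : P (L - w 1) ≤ a 1 * max (Hpart w (m+1) - (L - w 1)) 0 :=
          le_trans (hinv (L - w 1) (by linarith)) (eta_le_max ha1 hwn haA (by linarith))
        have e3 : Hpart w (m+1) - (L - w 1) = w 1 := by rw [← hL]; ring
        rw [e3, max_eq_left hw1.le] at e2
        rw [e1]
        nlinarith
      -- IVT
      obtain ⟨x, hxmem, hgx⟩ :
          ∃ x ∈ Set.Icc (0:ℝ) (L - w 1), P x - P (x + w 1) = w 1 * a 1 := by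
        have hsub := intermediate_value_Icc' (by linarith : (0:ℝ) ≤ L - w 1)
          (hgc.continuousOn (s := Set.Icc 0 (L - w 1)))
        have : w 1 * a 1 ∈ Set.Icc (P (L - w 1) - P (L - w 1 + w 1)) (P 0 - P (0 + w 1)) :=
          ⟨hgL, hg0⟩
        obtain ⟨x, hx1, hx2⟩ := hsub this
        exact ⟨x, hx1, hx2⟩
      obtain ⟨hx0, hxL⟩ := hxmem
      -- the window
      set W : Ω → ℝ := fun ω => max (T ω - x) 0 - max (T ω - (x + w 1)) 0 with hWdef
      have hWmeas : Measurable W := (meas_pos_part hT x).sub (meas_pos_part hT (x + w 1))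
      have hWint : Integrable W :=
        (integrable_pos_part hT hb x).sub (integrable_pos_part hT hb (x + w 1))
      have hWval : (∫ ω, W ω) = w 1 * a 1 := by
        rw [hWdef]
        rw [integral_sub (integrable_pos_part hT hb x) (integrable_pos_part hT hb (x + w 1))]
        exact hgx
      have hWmem : ∀ ω, W ω ∈ Set.Icc 0 (w 1) := fun ω =>
        ⟨win_nonneg hw1.le, win_le hw1.le⟩
      set T' : Ω → ℝ := fun ω => T ω - W ω with hT'def
      have hT'meas : Measurable T' := hT.sub hWmeas
      have hT'mem : ∀ ω, T' ω ∈ Set.Icc 0 (Hpart (fun j => w (j+1)) m) := by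
        intro ω
        rw [Hpart_shift]
        exact tprime_mem hw1.le (hb ω).1 (hb ω).2 hx0 (by linarith)
      have hT'int : Integrable T' := (integrable_T hT hb).sub hWint
      have hT'mean : (∫ ω, T' ω) = ∑ i ∈ Finset.Icc 1 m, (fun j => w (j+1)) i * (fun j => a (j+1)) i := by
        rw [hT'def]
        rw [integral_sub (integrable_T hT hb) hWint, hmean, hWval, hsplit]
        rw [sum_shift (fun i => w i * a i) m]
        simp only []
        ring
      have hT'inv : ∀ c : ℝ, 0 ≤ c →
          (∫ ω, max (T' ω - c) 0) ≤ eta m (fun j => w (j+1)) (fun j => a (j+1)) c := by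
        intro c hc
        rw [eta_shift hw1.le hc]
        rcases le_total c x with hcx | hcx
        · have e : (∫ ω, max (T' ω - c) 0) = P c - w 1 * a 1 := by
            have peq : (fun ω => max (T' ω - c) 0)
                = fun ω => max (T ω - c) 0 - W ω := by
              funext ω
              exact win_id_below hw1.le hcx
            rw [peq, integral_sub (integrable_pos_part hT hb c) hWint, hWval]
          rw [e]
          have h1 : P c ≤ eta (m+1) w a c := hinv c hc
          have h2 : eta (m+1) w a c - eta (m+1) w a (c + w 1) ≤ a 1 * w 1 :=
            eta_lip ha1 hwn haA hc hw1.le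
          linarith
        · have e : (∫ ω, max (T' ω - c) 0) = P (c + w 1) := by
            have peq : (fun ω => max (T' ω - c) 0) = fun ω => max (T ω - (c + w 1)) 0 := by
              funext ω
              exact win_id_above hw1.le hcx
            rw [peq]
          rw [e]
          exact hinv (c + w 1) (by linarith)
      obtain ⟨X', hX'prop, hX'sum⟩ := ih T' (fun j => w (j+1)) (fun j => a (j+1)) hT'meas
        (fun i hi => hw (i+1) (Finset.mem_Icc.mpr (by
          obtain ⟨a1, a2⟩ := Finset.mem_Icc.mp hi; omega)))
        (fun i hi => ha (i+1) (Finset.mem_Icc.mpr (by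
          obtain ⟨a1, a2⟩ := Finset.mem_Icc.mp hi; omega)))
        (fun i j hi hj hij => hmono (i+1) (j+1)
          (Finset.mem_Icc.mpr (by obtain ⟨a1, a2⟩ := Finset.mem_Icc.mp hi; omega))
          (Finset.mem_Icc.mpr (by obtain ⟨a1, a2⟩ := Finset.mem_Icc.mp hj; omega))
          (by omega))
        hT'mem hT'mean hT'inv
      refine ⟨fun k => if k = 1 then (fun ω => W ω / w 1) else X' (k-1), ?_, ?_⟩
      · intro k hk
        obtain ⟨hk1, hk2⟩ := Finset.mem_Icc.mp hk
        by_cases hk1' : k = 1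
        · subst hk1'
          simp only [if_pos rfl]
          refine ⟨hWmeas.div_const _, fun ω => ?_, ?_⟩
          · obtain ⟨hW0, hWu⟩ := hWmem ω
            exact ⟨div_nonneg hW0 hw1.le, (div_le_one hw1).mpr (by linarith)⟩
          · show (∫ ω, W ω / w 1) = a 1
            rw [integral_div, hWval, mul_comm, mul_div_assoc, div_self (ne_of_gt hw1), mul_one]
        · simp only [if_neg hk1']
          have hmem' : k - 1 ∈ Finset.Icc 1 m := Finset.mem_Icc.mpr (by omega)
          obtain ⟨p1, p2, p3⟩ := hX'prop (k-1) hmem'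
          refine ⟨p1, p2, ?_⟩
          rw [p3]
          show a (k-1+1) = a k
          rw [show k - 1 + 1 = k from by omega]
      · intro ω
        have hdec : T ω = W ω + T' ω := by rw [hT'def]; ring
        have eR1 : ∑ k ∈ Finset.Icc 1 1,
            w k * (if k = 1 then (fun ω => W ω / w 1) else X' (k-1)) ω = W ω := by
          rw [Finset.Icc_self, Finset.sum_singleton, if_pos rfl]
          show w 1 * (W ω / w 1) = W ω
          field_simp
        have eR2 : ∑ k ∈ Finset.Icc 2 (m+1),
            w k * (if k = 1 then (fun ω => W ω / w 1) else X' (k-1)) ω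
            = ∑ k ∈ Finset.Icc 1 m, w (k+1) * X' k ω := by
          rw [sum_shift (fun k => w k * (if k = 1 then (fun ω => W ω / w 1) else X' (k-1)) ω) m]
          refine Finset.sum_congr rfl fun i hi => ?_
          obtain ⟨hi1, hi2⟩ := Finset.mem_Icc.mp hi
          rw [if_neg (by omega : ¬ (i+1 = 1)), Nat.add_sub_cancel]
        rw [hdec, hX'sum ω,
          Icc_split 1 (m+1) (by omega) (fun k => w k * (if k = 1 then (fun ω => W ω / w 1) else X' (k-1)) ω),
          eR1, eR2]

end Main
lemma Icc_pop (k n : ℕ) (hk : k < n) (f : ℕ → ℝ) :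
    ∑ i ∈ Finset.Icc (k+1) n, f i = f (k+1) + ∑ i ∈ Finset.Icc (k+2) n, f i := by
  have e : ∀ a b : ℕ, Finset.Icc (a+1) b = Finset.Ioc a b := by
    intro a b; ext x; simp only [Finset.mem_Icc, Finset.mem_Ioc]; omega
  rw [e k n, show k+2 = (k+1)+1 from rfl, e (k+1) n,
    ← Finset.sum_Ioc_consecutive f (Nat.le_succ k) (by omega : k+1 ≤ n)]
  congr 1
  rw [show Finset.Ioc k (k+1) = {k+1} from by ext x; simp only [Finset.mem_Ioc, Finset.mem_singleton]; omega,
    Finset.sum_singleton]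

/-- Bounded-cost decomposition: if `S ∈ [0,1]` satisfies
`π_S(H_k) ≤ Σ_{i>k} h_i α_i` for `k = 0,…,n−1`, then there exists `β ∈ [0, α₁]`
such that with `a_k = min β α_k` one has `Σ h_k a_k = E[S]`,
`π_S(H_k) ≤ Σ_{i>k} h_i a_i` for `k = 1,…,n−1`, and `S = Σ h_k X_k` with
`X_k ∈ [0,1]` and `E[X_k] = a_k ≤ α_k`. -/
theorem bounded_cost_decomposition
    {Ω : Type*} [MeasureSpace Ω] [IsProbabilityMeasure (volume : Measure Ω)]
    (n : ℕ) (hn : 1 ≤ n) (h α : ℕ → ℝ)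
    (hpos : ∀ i ∈ Finset.Icc 1 n, 0 < h i)
    (hsum : ∑ i ∈ Finset.Icc 1 n, h i = 1)
    (hαmem : ∀ i ∈ Finset.Icc 1 n, α i ∈ Set.Ioc (0:ℝ) 1)
    (hαdec : ∀ i ∈ Finset.Icc 1 (n - 1), α (i + 1) < α i)
    (H : ℕ → ℝ) (hH : ∀ k, H k = ∑ i ∈ Finset.Icc 1 k, h i)
    (S : Ω → ℝ) (hSmeas : Measurable S) (hSb : ∀ ω, S ω ∈ Set.Icc (0:ℝ) 1)
    (hSLT : ∀ k < n,
      (∫ ω, max (S ω - H k) 0) ≤ ∑ i ∈ Finset.Icc (k + 1) n, h i * α i) :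
    ∃ β ∈ Set.Icc (0:ℝ) (α 1),
      (∑ k ∈ Finset.Icc 1 n, h k * min β (α k)) = ∫ ω, S ω ∧
      (∀ k ∈ Finset.Icc 1 (n - 1),
        (∫ ω, max (S ω - H k) 0) ≤ ∑ i ∈ Finset.Icc (k + 1) n, h i * min β (α i)) ∧
      ∃ X : ℕ → Ω → ℝ,
        (∀ k ∈ Finset.Icc 1 n,
          (∀ ω, X k ω ∈ Set.Icc (0:ℝ) 1) ∧
          (∫ ω, X k ω) = min β (α k) ∧ min β (α k) ≤ α k) ∧
        ∀ ω, S ω = ∑ k ∈ Finset.Icc 1 n, h k * X k ω := by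
  classical
  have h1mem : (1:ℕ) ∈ Finset.Icc 1 n := Finset.mem_Icc.mpr ⟨le_rfl, hn⟩
  have hα1pos : 0 < α 1 := (hαmem 1 h1mem).1
  have hwn : ∀ i ∈ Finset.Icc 1 n, 0 ≤ h i := fun i hi => (hpos i hi).le
  have hHpart : ∀ k, H k = Hpart h k := fun k => hH k
  have hHn1 : Hpart h n = 1 := hsum
  -- monotonicity of α
  have hαmonoD : ∀ d i : ℕ, 1 ≤ i → i + d ≤ n → α (i + d) ≤ α i := by
    intro d
    induction d with
    | zero => intro i _ _; simp
    | succ d ihd =>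
        intro i hi hin
        have h1 : α (i + d + 1) < α (i + d) :=
          hαdec (i + d) (Finset.mem_Icc.mpr ⟨by omega, by omega⟩)
        exact le_trans h1.le (ihd i hi (by omega))
  have hαmono : ∀ i j : ℕ, 1 ≤ i → i ≤ j → j ≤ n → α j ≤ α i := by
    intro i j hi hij hjn
    obtain ⟨d, rfl⟩ : ∃ d, j = i + d := ⟨j - i, by omega⟩
    exact hαmonoD d i hi (by omega)
  -- choose β by IVT
  set F : ℝ → ℝ := fun b => ∑ k ∈ Finset.Icc 1 n, h k * min b (α k) with hF
  have hFc : Continuous F := by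
    apply continuous_finset_sum
    intro k _
    exact continuous_const.mul (continuous_id.min continuous_const)
  have hF0 : F 0 = 0 := by
    apply Finset.sum_eq_zero
    intro k hk
    rw [min_eq_left (hαmem k hk).1.le, mul_zero]
  have hFα1 : F (α 1) = ∑ k ∈ Finset.Icc 1 n, h k * α k := by
    apply Finset.sum_congr rfl
    intro k hk
    rw [min_eq_right (hαmono 1 k le_rfl (Finset.mem_Icc.mp hk).1 (Finset.mem_Icc.mp hk).2)]
  have hES0 : 0 ≤ ∫ ω, S ω := integral_nonneg fun ω => (hSb ω).1
  have hESub : (∫ ω, S ω) ≤ ∑ k ∈ Finset.Icc 1 n, h k * α k := by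
    have h0 := hSLT 0 (by omega)
    have hH0 : H 0 = 0 := by rw [hH]; simp
    rw [hH0] at h0
    rwa [piv_at_zero hSb] at h0
  obtain ⟨β, hβmem, hFβ⟩ : ∃ β ∈ Set.Icc (0:ℝ) (α 1), F β = ∫ ω, S ω := by
    have hsub := intermediate_value_Icc hα1pos.le (hFc.continuousOn (s := Set.Icc 0 (α 1)))
    have : (∫ ω, S ω) ∈ Set.Icc (F 0) (F (α 1)) := by
      rw [hF0, hFα1]; exact ⟨hES0, hESub⟩
    obtain ⟨β, hβ1, hβ2⟩ := hsub this
    exact ⟨β, hβ1, hβ2⟩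
  obtain ⟨hβ0, hβα1⟩ := hβmem
  set a : ℕ → ℝ := fun k => min β (α k) with ha
  have hanonneg : ∀ i ∈ Finset.Icc 1 n, 0 ≤ a i := fun i hi =>
    le_min hβ0 (hαmem i hi).1.le
  have hamono : ∀ i j : ℕ, i ∈ Finset.Icc 1 n → j ∈ Finset.Icc 1 n → i ≤ j → a j ≤ a i := by
    intro i j hi hj hij
    exact min_le_min le_rfl
      (hαmono i j (Finset.mem_Icc.mp hi).1 hij (Finset.mem_Icc.mp hj).2)
  -- knot bounds with α (for k ≤ n)
  have knotsα : ∀ k ≤ n, (∫ ω, max (S ω - Hpart h k) 0)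
      ≤ ∑ i ∈ Finset.Icc (k+1) n, h i * α i := by
    intro k hk
    rcases Nat.lt_or_ge k n with hlt | hge
    · have := hSLT k hlt
      rwa [hHpart k] at this
    · have hkn : k = n := le_antisymm hk hge
      subst hkn
      rw [piv_zero hSb (by rw [hHn1])]
      rw [show Finset.Icc (k+1) k = (∅ : Finset ℕ) from by simp, Finset.sum_empty]
  -- Step A: π(c) ≤ eta n h α c for all c ≥ 0
  have stepA : ∀ c : ℝ, 0 ≤ c → (∫ ω, max (S ω - c) 0) ≤ eta n h α c := by
    intro c hc
    rcases le_or_gt 1 c with hc1 | hc1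
    · rw [piv_zero hSb hc1]
      exact eta_nonneg hwn (fun i hi => (hαmem i hi).1.le) c
    · set k := Nat.findGreatest (fun k => Hpart h k ≤ c) n with hkdef
      have hP0 : Hpart h 0 ≤ c := by rw [Hpart_zero]; exact hc
      have hkn : k ≤ n := Nat.findGreatest_le n
      have hPk : Hpart h k ≤ c := Nat.findGreatest_spec (P := fun k => Hpart h k ≤ c) (Nat.zero_le n) hP0
      have hkltn : k < n := by
        rcases Nat.lt_or_ge k n with h' | h'
        · exact h'
        · exfalso
          have : k = n := le_antisymm hkn h'
          rw [this, hHn1] at hPk; linarith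
      have hnext : ¬ (Hpart h (k+1) ≤ c) :=
        Nat.findGreatest_is_greatest (P := fun k => Hpart h k ≤ c) (n := n) (by omega) (by omega)
      push_neg at hnext
      have hwk1 : 0 < h (k+1) := hpos (k+1) (Finset.mem_Icc.mpr ⟨by omega, by omega⟩)
      have hHstep : Hpart h (k+1) = Hpart h k + h (k+1) := Hpart_succ h k
      set l : ℝ := (Hpart h (k+1) - c) / h (k+1) with hl
      set u : ℝ := (c - Hpart h k) / h (k+1) with hu
      have hl0 : 0 ≤ l := div_nonneg (by linarith) hwk1.le
      have hu0 : 0 ≤ u := div_nonneg (by linarith) hwk1.le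
      have hlu : l + u = 1 := by
        rw [hl, hu, ← add_div]
        rw [div_eq_one_iff_eq (ne_of_gt hwk1)]
        linarith
      have hcomb : c = l * Hpart h k + u * Hpart h (k+1) := by
        have e1 : l * h (k+1) = Hpart h (k+1) - c := by
          rw [hl, div_mul_cancel₀ _ (ne_of_gt hwk1)]
        have e2 : u * h (k+1) = c - Hpart h k := by
          rw [hu, div_mul_cancel₀ _ (ne_of_gt hwk1)]
        nlinarith [hlu, e1, e2, hHstep]
      have hpconv := piv_convex hSmeas hSb hl0 hu0 hlu (c₁ := Hpart h k) (c₂ := Hpart h (k+1))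
      rw [← hcomb] at hpconv
      have hb1 := knotsα k (by omega)
      have hb2 : (∫ ω, max (S ω - Hpart h (k+1)) 0)
          ≤ ∑ i ∈ Finset.Icc (k+2) n, h i * α i := by
        have hh := knotsα (k+1) (by omega)
        rwa [show k+1+1 = k+2 from rfl] at hh
      have hetaval : eta n h α c
          = α (k+1) * (Hpart h (k+1) - c) + ∑ i ∈ Finset.Icc (k+2) n, α i * h i :=
        eta_block hwn (by omega) hPk hnext.le
      rw [hetaval]
      have hpop : ∑ i ∈ Finset.Icc (k+1) n, h i * α i
          = h (k+1) * α (k+1) + ∑ i ∈ Finset.Icc (k+2) n, h i * α i :=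
        Icc_pop k n hkltn (fun i => h i * α i)
      have hcomm : ∑ i ∈ Finset.Icc (k+2) n, α i * h i
          = ∑ i ∈ Finset.Icc (k+2) n, h i * α i :=
        Finset.sum_congr rfl fun i _ => mul_comm _ _
      rw [hcomm]
      have e1 : l * h (k+1) = Hpart h (k+1) - c := by
        rw [hl, div_mul_cancel₀ _ (ne_of_gt hwk1)]
      calc (∫ ω, max (S ω - c) 0)
          ≤ l * (∫ ω, max (S ω - Hpart h k) 0) + u * ∫ ω, max (S ω - Hpart h (k+1)) 0 :=
            hpconv
        _ ≤ l * (∑ i ∈ Finset.Icc (k+1) n, h i * α i)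
            + u * ∑ i ∈ Finset.Icc (k+2) n, h i * α i := by
            have t1 := mul_le_mul_of_nonneg_left hb1 hl0
            have t2 := mul_le_mul_of_nonneg_left hb2 hu0
            linarith
        _ = α (k+1) * (Hpart h (k+1) - c) + ∑ i ∈ Finset.Icc (k+2) n, h i * α i := by
            rw [hpop]
            linear_combination α (k+1) * e1 + (∑ i ∈ Finset.Icc (k+2) n, h i * α i) * hlu
  -- the index m* where β crosses α
  set ms : ℕ := Nat.findGreatest (fun k => β ≤ α k) n with hmsdef
  have hms1 : 1 ≤ ms := Nat.le_findGreatest hn hβα1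
  have hmsn : ms ≤ n := Nat.findGreatest_le n
  have haβ : ∀ i, 1 ≤ i → i ≤ ms → a i = β := by
    intro i hi1 hims
    have hspec : β ≤ α ms := Nat.findGreatest_spec (P := fun k => β ≤ α k) hn hβα1
    exact min_eq_left (le_trans hspec (hαmono i ms hi1 hims hmsn))
  have haα : ∀ i, ms < i → i ≤ n → a i = α i := by
    intro i hmsi hin
    have : ¬ (β ≤ α i) := Nat.findGreatest_is_greatest (P := fun k => β ≤ α k) (n := n) hmsi hin
    exact min_eq_right (by linarith)
  -- mean value: F β expressed via the split
  have hHmspos : 0 < Hpart h ms := by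
    have h1 : h 1 ≤ Hpart h ms := by
      have := Hpart_mono hwn (show (1:ℕ) ≤ ms from hms1) hmsn
      rwa [Hpart_one] at this
    linarith [hpos 1 h1mem]
  have hFsplit : F β = β * Hpart h ms + ∑ i ∈ Finset.Icc (ms+1) n, h i * α i := by
    show (∑ i ∈ Finset.Icc 1 n, h i * min β (α i))
        = β * Hpart h ms + ∑ i ∈ Finset.Icc (ms+1) n, h i * α i
    rw [Icc_split ms n hmsn (fun i => h i * min β (α i))]
    congr 1
    · have e0 : ∑ i ∈ Finset.Icc 1 ms, h i * β = β * Hpart h ms := by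
        rw [← Finset.sum_mul, mul_comm]; rfl
      rw [← e0]
      apply Finset.sum_congr rfl
      intro i hi
      obtain ⟨hi1, hi2⟩ := Finset.mem_Icc.mp hi
      rw [show min β (α i) = β from haβ i hi1 hi2]
    · apply Finset.sum_congr rfl
      intro i hi
      obtain ⟨hi1, hi2⟩ := Finset.mem_Icc.mp hi
      rw [show min β (α i) = α i from haα i (by omega) hi2]
  -- the main invariant
  have key : ∀ c : ℝ, 0 ≤ c → (∫ ω, max (S ω - c) 0) ≤ eta n h a c := by
    intro c hc
    rcases le_or_gt (Hpart h ms) c with hcms | hcms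
    · have : eta n h a c = eta n h α c := by
        unfold eta
        apply Finset.sum_congr rfl
        intro i hi
        obtain ⟨hi1, hi2⟩ := Finset.mem_Icc.mp hi
        rcases le_or_gt i ms with him | him
        · have hz : blk h i c = 0 :=
            blk_zero_of_ge hwn hi (le_trans (Hpart_mono hwn him hmsn) hcms)
          rw [hz, mul_zero, mul_zero]
        · rw [haα i him hi2]
      rw [this]
      exact stepA c hc
    · -- c < Hpart h ms
      have hetaval : eta n h a c = β * (Hpart h ms - c) + ∑ i ∈ Finset.Icc (ms+1) n, α i * h i := by
        unfold eta
        rw [Icc_split ms n hmsn (fun i => a i * blk h i c)]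
        congr 1
        · have e1 : ∀ i ∈ Finset.Icc 1 ms, a i * blk h i c = β * blk h i c := by
            intro i hi
            obtain ⟨hi1, hi2⟩ := Finset.mem_Icc.mp hi
            rw [haβ i hi1 hi2]
          rw [Finset.sum_congr rfl e1, ← Finset.mul_sum, blk_sum' h ms hc,
            max_eq_left (by linarith)]
        · apply Finset.sum_congr rfl
          intro i hi
          obtain ⟨hi1, hi2⟩ := Finset.mem_Icc.mp hi
          rw [haα i (by omega) hi2, blk_full (by omega) (hwn i (Finset.mem_Icc.mpr (by omega)))
            (le_trans hcms.le (Hpart_mono hwn (by omega) (by omega)))]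
      rw [hetaval]
      set l : ℝ := (Hpart h ms - c) / Hpart h ms with hl
      set u : ℝ := c / Hpart h ms with hu
      have hl0 : 0 ≤ l := div_nonneg (by linarith) hHmspos.le
      have hu0 : 0 ≤ u := div_nonneg hc hHmspos.le
      have hlu : l + u = 1 := by
        rw [hl, hu, ← add_div, div_eq_one_iff_eq (ne_of_gt hHmspos)]
        ring
      have hcomb : c = l * 0 + u * Hpart h ms := by
        rw [hu, div_mul_cancel₀ _ (ne_of_gt hHmspos)]
        ring
      have hpconv := piv_convex hSmeas hSb hl0 hu0 hlu (c₁ := 0) (c₂ := Hpart h ms)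
      rw [← hcomb] at hpconv
      rw [piv_at_zero hSb] at hpconv
      have hbms := knotsα ms hmsn
      have hESval : (∫ ω, S ω) = β * Hpart h ms + ∑ i ∈ Finset.Icc (ms+1) n, h i * α i := by
        rw [← hFβ, hFsplit]
      have e1 : l * Hpart h ms = Hpart h ms - c := by
        rw [hl, div_mul_cancel₀ _ (ne_of_gt hHmspos)]
      have e2 : u * Hpart h ms = c := by
        rw [hu, div_mul_cancel₀ _ (ne_of_gt hHmspos)]
      have hcomm : ∑ i ∈ Finset.Icc (ms+1) n, α i * h i
          = ∑ i ∈ Finset.Icc (ms+1) n, h i * α i :=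
        Finset.sum_congr rfl fun i _ => mul_comm _ _
      rw [hcomm]
      calc (∫ ω, max (S ω - c) 0)
          ≤ l * (∫ ω, S ω) + u * ∫ ω, max (S ω - Hpart h ms) 0 := hpconv
        _ ≤ l * (∫ ω, S ω) + u * ∑ i ∈ Finset.Icc (ms+1) n, h i * α i := by
            have t := mul_le_mul_of_nonneg_left hbms hu0
            linarith
        _ = β * (Hpart h ms - c) + ∑ i ∈ Finset.Icc (ms+1) n, h i * α i := by
            rw [hESval]
            linear_combination β * e1 + (∑ i ∈ Finset.Icc (ms+1) n, h i * α i) * hlu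
  -- apply the decomposition lemma
  have hmean' : (∫ ω, S ω) = ∑ i ∈ Finset.Icc 1 n, h i * a i := by
    rw [← hFβ]
  obtain ⟨X, hXprop, hXsum⟩ := decomp_aux n S h a hSmeas hpos hanonneg hamono
    (fun ω => by rw [hHn1]; exact hSb ω)
    hmean'
    key
  refine ⟨β, ⟨hβ0, hβα1⟩, ?_⟩
  refine ⟨hFβ, ?_, X, ?_, hXsum⟩
  · intro k hk
    obtain ⟨hk1, hk2⟩ := Finset.mem_Icc.mp hk
    have hkey := key (Hpart h k) (Hpart_nonneg hwn (by omega))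
    rw [eta_knot hwn (by omega : k ≤ n)] at hkey
    rw [hHpart k]
    refine le_trans hkey ?_
    exact le_of_eq (Finset.sum_congr rfl fun i _ => mul_comm _ _)
  · intro k hk
    obtain ⟨q1, q2, q3⟩ := hXprop k hk
    exact ⟨q2, q3, min_le_right _ _⟩
end
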